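/- arXiv:2604.26415 — 6 statements merged into one kernel-verified Lean document; each statement's English description precedes it below -/
import Mathlib

section
/- Let ⟨A⟩ be a GCNS numerical semigroup with parameters a, k, d, u, B = (b_1,...,b_k), s_1 ≤ ⋯ ≤ s_{k−1}, and let p be a positive divisor of a with p ≠ a. If u*a + d + k − 2 ≥ Σ_{i=1}^{k−1} s_i, then the genus of the quotient is g(⟨A⟩/p) = Σ_{r=1}^{a/p − 1} (Σ_{i=1}^k x_i)_{rp} + ((u*a + d − 1)/2) * (a/p − 1), where (Σ_{i=1}^k x_i)_{rp} denotes the sum of the coordinates of the greedy presentation X(r*p) of r*p. -/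
/-- greedy digit sum with digits `b 1, ..., b j` -/
def gsum (b : ℕ → ℕ) : ℕ → ℕ → ℕ
  | 0, N => N
  | 1, N => N
  | (j+2), N => N / b (j+2) + gsum b (j+1) (N % b (j+2))

lemma gsum_succ (b : ℕ → ℕ) (j : ℕ) (hj : 1 ≤ j) (N : ℕ) :
    gsum b (j+1) N = N / b (j+1) + gsum b j (N % b (j+1)) := by
  obtain ⟨j', rfl⟩ := Nat.exists_eq_add_of_le hj
  rw [Nat.add_comm 1 j']
  rfl

lemma gsum_zero (b : ℕ → ℕ) (j : ℕ) : gsum b j 0 = 0 := by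
  induction j with
  | zero => rfl
  | succ j ih =>
    rcases Nat.eq_zero_or_pos j with rfl | hj
    · rfl
    · rw [gsum_succ b j hj, Nat.zero_div, Nat.zero_mod, ih]

section NumSys

variable (b s : ℕ → ℕ) (k : ℕ) (hk : 2 ≤ k) (hb1 : b 1 = 1)
  (hbrec : ∀ i, 1 ≤ i → i ≤ k - 1 → b (i + 1) = s i * b i + 1)
  (hs1 : ∀ i, 1 ≤ i → i ≤ k - 1 → 1 ≤ s i)
  (hsmono : ∀ i, 2 ≤ i → i ≤ k - 1 → s (i - 1) ≤ s i)

include hb1 hbrec in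
lemma bpos : ∀ j, 1 ≤ j → j ≤ k → 1 ≤ b j := by
  intro j h1 h2
  rcases eq_or_lt_of_le h1 with h | h
  · rw [← h, hb1]
  · have hj : j - 1 + 1 = j := by omega
    rw [← hj, hbrec (j-1) (by omega) (by omega)]
    omega

include hk hb1 hbrec hs1 in
lemma bmono : ∀ i j, 1 ≤ i → i ≤ j → j ≤ k → b i ≤ b j := by
  intro i j h1 hij hjk
  induction j with
  | zero => omega
  | succ n ih =>
    rcases Nat.lt_or_ge i (n+1) with h | h
    · have hn : 1 ≤ n := by omega
      have hb : b (n+1) = s n * b n + 1 := hbrec n hn (by omega)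
      have h2 : b i ≤ b n := ih (by omega) (by omega)
      have h3 : 1 ≤ b n := bpos b s k hb1 hbrec n hn (by omega)
      have h4 : 1 ≤ s n := hs1 n hn (by omega)
      have h5 : b n ≤ s n * b n := Nat.le_mul_of_pos_left _ h4
      omega
    · have : i = n + 1 := by omega
      rw [this]

include hk hb1 hbrec in
lemma gsum_top : ∀ j, 1 ≤ j → j ≤ k - 1 → gsum b j (s j * b j) = s j := by
  intro j h1 h2
  rcases eq_or_lt_of_le h1 with h | h
  · rw [← h, hb1]; simp [gsum]
  · have hj : j - 1 + 1 = j := by omega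
    have hbp : 1 ≤ b j := bpos b s k hb1 hbrec j h1 (by omega)
    rw [← hj, gsum_succ b (j-1) (by omega), hj, Nat.mul_div_cancel _ hbp,
      Nat.mul_mod_left, gsum_zero]
    omega

include hk hb1 hbrec hsmono in
lemma gsum_drop : ∀ j, 1 ≤ j → j ≤ k - 1 → ∀ R, gsum b j R + 1 ≤ gsum b j (R + 1) + s j := by
  intro j
  induction j with
  | zero => omega
  | succ n ih =>
    intro h1 h2 R
    rcases Nat.eq_zero_or_pos n with rfl | hn
    · show gsum b 1 R + 1 ≤ gsum b 1 (R+1) + s 1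
      show R + 1 ≤ (R + 1) + s 1
      omega
    -- n ≥ 1
    have hbp : 1 ≤ b (n+1) := bpos b s k hb1 hbrec (n+1) (by omega) (by omega)
    have hdm := Nat.div_add_mod R (b (n+1))
    have hrlt : R % b (n+1) < b (n+1) := Nat.mod_lt _ (by omega)
    have hsm : s n ≤ s (n+1) := by
      have := hsmono (n+1) (by omega) (by omega)
      simpa using this
    rw [gsum_succ b n hn R, gsum_succ b n hn (R+1)]
    rcases Nat.lt_or_ge (R % b (n+1) + 1) (b (n+1)) with hcase | hcase
    · have e0 : R + 1 = (R % b (n+1) + 1) + b (n+1) * (R / b (n+1)) := by omega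
      have e1 : (R+1) / b (n+1) = R / b (n+1) := by
        rw [e0, Nat.add_mul_div_left _ _ (by omega : 0 < b (n+1)),
          Nat.div_eq_of_lt hcase, Nat.zero_add]
      have e2 : (R+1) % b (n+1) = R % b (n+1) + 1 := by
        rw [e0, Nat.add_mul_mod_self_left, Nat.mod_eq_of_lt hcase]
      rw [e1, e2]
      have := ih hn (by omega) (R % b (n+1))
      omega
    · have hre : R % b (n+1) + 1 = b (n+1) := by omega
      have e0 : R + 1 = (R / b (n+1) + 1) * b (n+1) := by
        rw [Nat.add_mul, one_mul, Nat.mul_comm]; omega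
      have e1 : (R+1) / b (n+1) = R / b (n+1) + 1 := by
        rw [e0, Nat.mul_div_cancel _ (by omega : 0 < b (n+1))]
      have e2 : (R+1) % b (n+1) = 0 := by rw [e0, Nat.mul_mod_left]
      rw [e1, e2, gsum_zero]
      have hbn : b (n+1) = s n * b n + 1 := hbrec n hn (by omega)
      have hrv : R % b (n+1) = s n * b n := by omega
      rw [hrv, gsum_top b s k hk hb1 hbrec n hn (by omega)]
      omega

include hk hb1 hbrec hs1 hsmono in
lemma gsum_step : ∀ j, 1 ≤ j → j ≤ k - 1 → ∀ V, gsum b j V + 1 ≤ gsum b j (V + b (j+1)) := by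
  intro j
  induction j with
  | zero => omega
  | succ n ih =>
    intro h1 h2 V
    rcases Nat.eq_zero_or_pos n with rfl | hn
    · show gsum b 1 V + 1 ≤ gsum b 1 (V + b 2)
      show V + 1 ≤ V + b 2
      have : 1 ≤ b 2 := bpos b s k hb1 hbrec 2 (by omega) (by omega)
      omega
    -- n ≥ 1
    have hbp : 1 ≤ b (n+1) := bpos b s k hb1 hbrec (n+1) (by omega) (by omega)
    have hb2 : b (n+2) = s (n+1) * b (n+1) + 1 := hbrec (n+1) (by omega) (by omega)
    have hdm := Nat.div_add_mod V (b (n+1))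
    have hrlt : V % b (n+1) < b (n+1) := Nat.mod_lt _ (by omega)
    have hsm : s n ≤ s (n+1) := by
      have := hsmono (n+1) (by omega) (by omega)
      simpa using this
    rw [gsum_succ b n hn V, gsum_succ b n hn (V + b (n+2))]
    rcases Nat.lt_or_ge (V % b (n+1) + 1) (b (n+1)) with hcase | hcase
    · have e0 : V + b (n+2) = (V % b (n+1) + 1) + b (n+1) * (V / b (n+1) + s (n+1)) := by
        rw [Nat.mul_add, hb2, Nat.mul_comm (s (n+1)) (b (n+1))]
        omega
      have e1 : (V + b (n+2)) / b (n+1) = V / b (n+1) + s (n+1) := by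
        rw [e0, Nat.add_mul_div_left _ _ (by omega : 0 < b (n+1)),
          Nat.div_eq_of_lt hcase, Nat.zero_add]
      have e2 : (V + b (n+2)) % b (n+1) = V % b (n+1) + 1 := by
        rw [e0, Nat.add_mul_mod_self_left, Nat.mod_eq_of_lt hcase]
      rw [e1, e2]
      have := gsum_drop b s k hk hb1 hbrec hsmono n hn (by omega) (V % b (n+1))
      omega
    · have hre : V % b (n+1) + 1 = b (n+1) := by omega
      have e0 : V + b (n+2) = b (n+1) * (V / b (n+1) + s (n+1) + 1) := by
        rw [Nat.mul_add, Nat.mul_add, Nat.mul_one, hb2, Nat.mul_comm (s (n+1)) (b (n+1))]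
        omega
      have e1 : (V + b (n+2)) / b (n+1) = V / b (n+1) + s (n+1) + 1 := by
        rw [e0, Nat.mul_div_cancel_left _ (by omega : 0 < b (n+1))]
      have e2 : (V + b (n+2)) % b (n+1) = 0 := by rw [e0, Nat.mul_mod_right]
      rw [e1, e2, gsum_zero]
      have hbn : b (n+1) = s n * b n + 1 := hbrec n hn (by omega)
      have hrv : V % b (n+1) = s n * b n := by omega
      rw [hrv, gsum_top b s k hk hb1 hbrec n hn (by omega)]
      omega

include hk hb1 hbrec hs1 hsmono in
lemma gsum_step_mul (j : ℕ) (h1 : 1 ≤ j) (h2 : j ≤ k - 1) :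
    ∀ (t V : ℕ), gsum b j V + t ≤ gsum b j (V + t * b (j+1)) := by
  intro t
  induction t with
  | zero => simp
  | succ t ih =>
    intro V
    have h3 := ih V
    have h4 := gsum_step b s k hk hb1 hbrec hs1 hsmono j h1 h2 (V + t * b (j+1))
    have e : V + (t+1) * b (j+1) = V + t * b (j+1) + b (j+1) := by ring
    rw [e]
    omega

include hk hb1 hbrec hs1 hsmono in
lemma gsum_min : ∀ j, 1 ≤ j → j ≤ k → ∀ y : ℕ → ℕ,
    gsum b j (∑ i ∈ Finset.Icc 1 j, b i * y i) ≤ ∑ i ∈ Finset.Icc 1 j, y i := by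
  intro j
  induction j with
  | zero => omega
  | succ n ih =>
    intro h1 h2 y
    rcases Nat.eq_zero_or_pos n with rfl | hn
    · simp [Finset.Icc_self, hb1, gsum]
    have hbp : 1 ≤ b (n+1) := bpos b s k hb1 hbrec (n+1) (by omega) (by omega)
    have hsplit : ∑ i ∈ Finset.Icc 1 (n+1), b i * y i
        = (∑ i ∈ Finset.Icc 1 n, b i * y i) + b (n+1) * y (n+1) :=
      Finset.sum_Icc_succ_top (by omega) _
    have hsplit2 : ∑ i ∈ Finset.Icc 1 (n+1), y i
        = (∑ i ∈ Finset.Icc 1 n, y i) + y (n+1) :=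
      Finset.sum_Icc_succ_top (by omega) _
    set N := ∑ i ∈ Finset.Icc 1 (n+1), b i * y i with hN
    set L := ∑ i ∈ Finset.Icc 1 n, b i * y i with hL
    have hdm := Nat.div_add_mod N (b (n+1))
    have hrlt : N % b (n+1) < b (n+1) := Nat.mod_lt _ (by omega)
    have hy : y (n+1) ≤ N / b (n+1) := by
      rw [Nat.le_div_iff_mul_le (by omega : 0 < b (n+1))]
      rw [Nat.mul_comm]
      omega
    have hLeq : L = N % b (n+1) + (N / b (n+1) - y (n+1)) * b (n+1) := by
      have h5 : (N / b (n+1) - y (n+1)) * b (n+1)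
          = N / b (n+1) * b (n+1) - y (n+1) * b (n+1) := Nat.sub_mul _ _ _
      have h6 : N / b (n+1) * b (n+1) = b (n+1) * (N / b (n+1)) := Nat.mul_comm _ _
      have h7 : y (n+1) * b (n+1) = b (n+1) * y (n+1) := Nat.mul_comm _ _
      have h8 : b (n+1) * y (n+1) ≤ b (n+1) * (N / b (n+1)) :=
        Nat.mul_le_mul_left _ hy
      omega
    have hmin := ih hn (by omega) y
    rw [← hL] at hmin
    have hstep := gsum_step_mul b s k hk hb1 hbrec hs1 hsmono n hn (by omega)
      (N / b (n+1) - y (n+1)) (N % b (n+1))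
    rw [← hLeq] at hstep
    rw [gsum_succ b n hn N, hsplit2]
    omega

include hk hb1 hbrec in
lemma gsum_greedy (x : ℕ → ℕ)
    (hxle : ∀ i, 1 ≤ i → i ≤ k - 1 → x i ≤ s i)
    (hxzero : ∀ i, 2 ≤ i → i ≤ k - 1 → x i = s i → ∀ j, 1 ≤ j → j < i → x j = 0) :
    ∀ j, 1 ≤ j → j ≤ k →
      (j ≤ k - 1 → ∑ i ∈ Finset.Icc 1 j, b i * x i < b (j+1)) ∧
      gsum b j (∑ i ∈ Finset.Icc 1 j, b i * x i) = ∑ i ∈ Finset.Icc 1 j, x i := by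
  intro j
  induction j with
  | zero => omega
  | succ n ih =>
    intro h1 h2
    rcases Nat.eq_zero_or_pos n with rfl | hn
    · constructor
      · intro hle
        have hb2 : b 2 = s 1 * b 1 + 1 := hbrec 1 (by omega) hle
        have := hxle 1 (by omega) hle
        simp only [Finset.Icc_self, Finset.sum_singleton, hb1] at *
        nlinarith
      · simp [Finset.Icc_self, hb1, gsum]
    -- n ≥ 1
    obtain ⟨ihb, ihg⟩ := ih hn (by omega)
    have hVn : ∑ i ∈ Finset.Icc 1 n, b i * x i < b (n+1) := ihb (by omega)
    have hbp : 1 ≤ b (n+1) := bpos b s k hb1 hbrec (n+1) (by omega) (by omega)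
    have hsplit : ∑ i ∈ Finset.Icc 1 (n+1), b i * x i
        = (∑ i ∈ Finset.Icc 1 n, b i * x i) + b (n+1) * x (n+1) :=
      Finset.sum_Icc_succ_top (by omega) _
    have hsplit2 : ∑ i ∈ Finset.Icc 1 (n+1), x i
        = (∑ i ∈ Finset.Icc 1 n, x i) + x (n+1) :=
      Finset.sum_Icc_succ_top (by omega) _
    have e0 : ∑ i ∈ Finset.Icc 1 (n+1), b i * x i
        = (∑ i ∈ Finset.Icc 1 n, b i * x i) + b (n+1) * x (n+1) := hsplit
    have e1 : (∑ i ∈ Finset.Icc 1 (n+1), b i * x i) / b (n+1) = x (n+1) := by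
      rw [e0, Nat.add_mul_div_left _ _ (by omega : 0 < b (n+1)),
        Nat.div_eq_of_lt hVn, Nat.zero_add]
    have e2 : (∑ i ∈ Finset.Icc 1 (n+1), b i * x i) % b (n+1)
        = ∑ i ∈ Finset.Icc 1 n, b i * x i := by
      rw [e0, Nat.add_mul_mod_self_left, Nat.mod_eq_of_lt hVn]
    constructor
    · intro hle
      have hb2 : b (n+2) = s (n+1) * b (n+1) + 1 := hbrec (n+1) (by omega) hle
      have hxl : x (n+1) ≤ s (n+1) := hxle (n+1) (by omega) hle
      by_cases hx : x (n+1) = s (n+1)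
      · have hz : ∀ i ∈ Finset.Icc 1 n, b i * x i = 0 := by
          intro i hi
          simp only [Finset.mem_Icc] at hi
          rw [hxzero (n+1) (by omega) hle hx i hi.1 (by omega)]
          ring
        rw [e0, Finset.sum_eq_zero hz, hx, Nat.zero_add, hb2, Nat.mul_comm]
        omega
      · have hxl2 : x (n+1) + 1 ≤ s (n+1) := by omega
        have : b (n+1) * (x (n+1) + 1) ≤ b (n+1) * s (n+1) :=
          Nat.mul_le_mul_left _ hxl2
        have h9 : b (n+1) * s (n+1) = s (n+1) * b (n+1) := Nat.mul_comm _ _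
        rw [e0, hb2]
        have h10 : b (n+1) * (x (n+1) + 1) = b (n+1) * x (n+1) + b (n+1) := by ring
        omega
    · rw [gsum_succ b n hn, e1, e2, ihg, hsplit2]
      omega

end NumSys

lemma lowbound (k c : ℕ) (hk : 2 ≤ k) (s z : ℕ → ℕ)
    (hzle : ∀ i, 1 ≤ i → i ≤ k-1 → z i ≤ s i)
    (hzzero : ∀ i, 2 ≤ i → i ≤ k-1 → z i = s i → ∀ j, 1 ≤ j → j < i → z j = 0)
    (hs1 : ∀ i, 1 ≤ i → i ≤ k-1 → 1 ≤ s i)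
    (hcond : (∑ i ∈ Finset.Icc 1 (k-1), s i) + 2 ≤ c + k) :
    ∑ i ∈ Finset.Icc 1 (k-1), z i ≤ c := by
  by_cases hT : ∃ i ∈ Finset.Icc 2 (k-1), z i = s i
  · -- take the largest such index
    set T := (Finset.Icc 2 (k-1)).filter (fun i => z i = s i) with hTdef
    have hTne : T.Nonempty := by
      obtain ⟨i, hi, hz⟩ := hT
      exact ⟨i, by simp [hTdef, hi, hz]⟩
    set i₀ := T.max' hTne with hi₀def
    have hi₀T : i₀ ∈ T := T.max'_mem hTne
    have hi₀mem : i₀ ∈ Finset.Icc 2 (k-1) := Finset.mem_of_mem_filter _ hi₀T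
    have hi₀z : z i₀ = s i₀ := by
      have := Finset.mem_filter.mp hi₀T
      exact this.2
    simp only [Finset.mem_Icc] at hi₀mem
    have hmax : ∀ i, i₀ < i → i ≤ k - 1 → z i + 1 ≤ s i := by
      intro i h1 h2
      have hle := hzle i (by omega) h2
      rcases Nat.lt_or_ge (z i) (s i) with h | h
      · omega
      · exfalso
        have : i ∈ T := by
          simp only [hTdef, Finset.mem_filter, Finset.mem_Icc]
          exact ⟨⟨by omega, h2⟩, by omega⟩
        have := T.le_max' i this
        omega
    have hzero : ∀ j, 1 ≤ j → j < i₀ → z j = 0 :=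
      hzzero i₀ hi₀mem.1 hi₀mem.2 hi₀z
    -- split the sums
    have hsplitz : ∑ i ∈ Finset.Icc 1 (k-1), z i
        = ∑ i ∈ Finset.Icc 1 (i₀-1), z i + ∑ i ∈ Finset.Icc i₀ (k-1), z i := by
      rw [← Finset.sum_union]
      · congr 1
        ext t
        simp only [Finset.mem_union, Finset.mem_Icc]
        omega
      · rw [Finset.disjoint_left]
        intro t h1 h2
        simp only [Finset.mem_Icc] at h1 h2
        omega
    have hsplits : ∑ i ∈ Finset.Icc 1 (k-1), s i
        = ∑ i ∈ Finset.Icc 1 (i₀-1), s i + ∑ i ∈ Finset.Icc i₀ (k-1), s i := by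
      rw [← Finset.sum_union]
      · congr 1
        ext t
        simp only [Finset.mem_union, Finset.mem_Icc]
        omega
      · rw [Finset.disjoint_left]
        intro t h1 h2
        simp only [Finset.mem_Icc] at h1 h2
        omega
    have hz1 : ∑ i ∈ Finset.Icc 1 (i₀-1), z i = 0 := by
      apply Finset.sum_eq_zero
      intro i hi
      simp only [Finset.mem_Icc] at hi
      exact hzero i hi.1 (by omega)
    have hs1' : (i₀ - 1) ≤ ∑ i ∈ Finset.Icc 1 (i₀-1), s i := by
      have : ∑ i ∈ Finset.Icc 1 (i₀-1), 1 ≤ ∑ i ∈ Finset.Icc 1 (i₀-1), s i := by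
        apply Finset.sum_le_sum
        intro i hi
        simp only [Finset.mem_Icc] at hi
        exact hs1 i hi.1 (by omega)
      simpa using this
    -- on Icc i₀ (k-1) : z i₀ = s i₀ and z i + 1 ≤ s i above i₀
    have hsplitz2 : ∑ i ∈ Finset.Icc i₀ (k-1), z i
        = z i₀ + ∑ i ∈ Finset.Icc (i₀+1) (k-1), z i := by
      have : Finset.Icc i₀ (k-1) = insert i₀ (Finset.Icc (i₀+1) (k-1)) := by
        ext t
        simp only [Finset.mem_insert, Finset.mem_Icc]
        omega
      rw [this, Finset.sum_insert (by simp [Finset.mem_Icc])]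
    have hsplits2 : ∑ i ∈ Finset.Icc i₀ (k-1), s i
        = s i₀ + ∑ i ∈ Finset.Icc (i₀+1) (k-1), s i := by
      have : Finset.Icc i₀ (k-1) = insert i₀ (Finset.Icc (i₀+1) (k-1)) := by
        ext t
        simp only [Finset.mem_insert, Finset.mem_Icc]
        omega
      rw [this, Finset.sum_insert (by simp [Finset.mem_Icc])]
    have htail : ∑ i ∈ Finset.Icc (i₀+1) (k-1), z i + (k - 1 - i₀)
        ≤ ∑ i ∈ Finset.Icc (i₀+1) (k-1), s i := by
      have : ∑ i ∈ Finset.Icc (i₀+1) (k-1), (z i + 1)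
          ≤ ∑ i ∈ Finset.Icc (i₀+1) (k-1), s i := by
        apply Finset.sum_le_sum
        intro i hi
        simp only [Finset.mem_Icc] at hi
        exact hmax i (by omega) hi.2
      rw [Finset.sum_add_distrib] at this
      simp only [Finset.sum_const, Nat.card_Icc, smul_eq_mul, mul_one] at this
      have he : k - 1 + 1 - (i₀ + 1) = k - 1 - i₀ := by omega
      omega
    omega
  · push_neg at hT
    have hstep : ∀ i ∈ Finset.Icc 2 (k-1), z i + 1 ≤ s i := by
      intro i hi
      simp only [Finset.mem_Icc] at hi
      have := hzle i (by omega) hi.2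
      have := hT i (by simp [Finset.mem_Icc]; omega)
      omega
    have hsplitz : ∑ i ∈ Finset.Icc 1 (k-1), z i
        = z 1 + ∑ i ∈ Finset.Icc 2 (k-1), z i := by
      have : Finset.Icc 1 (k-1) = insert 1 (Finset.Icc 2 (k-1)) := by
        ext t
        simp only [Finset.mem_insert, Finset.mem_Icc]
        omega
      rw [this, Finset.sum_insert (by simp [Finset.mem_Icc])]
    have hsplits : ∑ i ∈ Finset.Icc 1 (k-1), s i
        = s 1 + ∑ i ∈ Finset.Icc 2 (k-1), s i := by
      have : Finset.Icc 1 (k-1) = insert 1 (Finset.Icc 2 (k-1)) := by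
        ext t
        simp only [Finset.mem_insert, Finset.mem_Icc]
        omega
      rw [this, Finset.sum_insert (by simp [Finset.mem_Icc])]
    have htail : ∑ i ∈ Finset.Icc 2 (k-1), z i + (k - 2)
        ≤ ∑ i ∈ Finset.Icc 2 (k-1), s i := by
      have : ∑ i ∈ Finset.Icc 2 (k-1), (z i + 1)
          ≤ ∑ i ∈ Finset.Icc 2 (k-1), s i := Finset.sum_le_sum hstep
      rw [Finset.sum_add_distrib] at this
      simp only [Finset.sum_const, Nat.card_Icc, smul_eq_mul, mul_one] at this
      omega
    have hz1 : z 1 ≤ s 1 := hzle 1 (by omega) (by omega)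
    omega


/-- genus of the quotient of a GCNS numerical semigroup.
If `u·a + d + k − 2 ≥ Σ s_i`, then
`g(⟨A⟩/p) = Σ_{r=1}^{a/p−1} (Σ_i x_i)_{rp} + ((u·a + d − 1)/2)·(a/p − 1)`,
where `(Σ_i x_i)_{rp}` is the coordinate sum of the greedy presentation of `r·p`.
(The identity is stated after multiplication by 2.) -/
theorem stmt_7 (a k u p : ℕ) (d : ℤ) (b s : ℕ → ℕ)
    (ha : 2 ≤ a) (hk : 2 ≤ k) (hu : 1 ≤ u)
    (hd : d ≠ 0) (hgcd : Int.gcd (a : ℤ) d = 1)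
    (hb1 : b 1 = 1)
    (hbrec : ∀ i, 1 ≤ i → i ≤ k - 1 → b (i + 1) = s i * b i + 1)
    (hs1 : ∀ i, 1 ≤ i → i ≤ k - 1 → 1 ≤ s i)
    (hsmono : ∀ i, 2 ≤ i → i ≤ k - 1 → s (i - 1) ≤ s i)
    (hneg : d < 0 → ∀ i, 1 ≤ i → i ≤ k →
      1 < ((u : ℤ) * b i + 1) * a + d * b i)
    (hp : 0 < p) (hpa : p ∣ a) (hpne : p ≠ a)
    (hcond : (∑ i ∈ Finset.Icc 1 (k - 1), (s i : ℤ)) ≤ (u : ℤ) * a + d + k - 2)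
    -- `x r` is the greedy presentation of `r * p`, for each `1 ≤ r ≤ a/p - 1`
    (x : ℕ → ℕ → ℕ)
    (hxsum : ∀ r, 1 ≤ r → r ≤ a / p - 1 →
      ∑ i ∈ Finset.Icc 1 k, b i * x r i = r * p)
    (hxk : ∀ r, 1 ≤ r → r ≤ a / p - 1 → x r k = r * p / b k)
    (hxle : ∀ r, 1 ≤ r → r ≤ a / p - 1 → ∀ i, 1 ≤ i → i ≤ k - 1 → x r i ≤ s i)
    (hxzero : ∀ r, 1 ≤ r → r ≤ a / p - 1 → ∀ i, 2 ≤ i → i ≤ k - 1 → x r i = s i →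
      ∀ j, 1 ≤ j → j < i → x r j = 0) :
    2 * (({n : ℕ | 0 < n ∧ ¬ ∃ y : ℕ → ℕ, (p * n : ℤ) = (y 0 : ℤ) * a +
          ∑ i ∈ Finset.Icc 1 k, (y i : ℤ) * (((u : ℤ) * b i + 1) * a + d * b i)}).ncard : ℤ)
      = 2 * (∑ r ∈ Finset.Icc 1 (a / p - 1),
          ((∑ i ∈ Finset.Icc 1 k, x r i : ℕ) : ℤ)) +
        ((u : ℤ) * a + d - 1) * (((a / p : ℕ) : ℤ) - 1) := by
  set q := a / p with hqdef
  have hq : p * q = a := Nat.mul_div_cancel' hpa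
  clear_value q
  have hq2 : 2 ≤ q := by
    have h1 : q ≠ 0 := by rintro h; rw [h, Nat.mul_zero] at hq; omega
    have h2 : q ≠ 1 := by rintro h; rw [h, Nat.mul_one] at hq; omega
    omega
  have ha0 : 0 < a := by omega
  -- the positive integer c = u*a + d
  have hc1 : (1:ℤ) ≤ (u:ℤ) * a + d := by
    have hone : ∀ i ∈ Finset.Icc 1 (k-1), (1:ℤ) ≤ (s i : ℤ) := by
      intro i hi
      simp only [Finset.mem_Icc] at hi
      exact_mod_cast hs1 i hi.1 hi.2
    have hcard : ((k:ℤ) - 1) ≤ ∑ i ∈ Finset.Icc 1 (k-1), (s i : ℤ) := by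
      have h := Finset.card_nsmul_le_sum (Finset.Icc 1 (k-1)) (fun i => (s i : ℤ)) 1 hone
      rw [Nat.card_Icc, nsmul_eq_mul, mul_one,
        (by omega : k - 1 + 1 - 1 = k - 1), Nat.cast_sub (by omega : 1 ≤ k),
        Nat.cast_one] at h
      exact h
    linarith
  set c := ((u:ℤ) * a + d).toNat with hcdef
  have hc : (c:ℤ) = (u:ℤ) * a + d := Int.toNat_of_nonneg (by linarith)
  have hc1' : 1 ≤ c := by
    have h1 : (1:ℤ) ≤ (c:ℤ) := by rw [hc]; exact hc1
    exact_mod_cast h1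
  -- coprimality
  have hcopda : IsCoprime (d:ℤ) ((a:ℕ):ℤ) := by
    rw [Int.isCoprime_iff_gcd_eq_one, Int.gcd_comm]
    exact hgcd
  have hcopca : IsCoprime ((c:ℕ):ℤ) ((a:ℕ):ℤ) := by
    have h := hcopda.add_mul_left_left (u:ℤ)
    rwa [show d + ((a:ℕ):ℤ) * (u:ℤ) = (c:ℤ) by rw [hc]; ring] at h
  have hNca : Nat.Coprime c a := by
    have h := Int.isCoprime_iff_gcd_eq_one.mp hcopca
    rwa [Int.gcd_natCast_natCast] at h
  have hqdvd : ((q:ℕ):ℤ) ∣ ((a:ℕ):ℤ) := ⟨(p:ℤ), by exact_mod_cast (by rw [← hq]; ring : a = q * p)⟩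
  have hcopcq : IsCoprime ((c:ℕ):ℤ) ((q:ℕ):ℤ) := hcopca.of_isCoprime_of_dvd_right hqdvd
  have hNcq : Nat.Coprime c q := by
    have h := Int.isCoprime_iff_gcd_eq_one.mp hcopcq
    rwa [Int.gcd_natCast_natCast] at h
  -- expansion of representations
  have hexp : ∀ y : ℕ → ℕ, ∑ i ∈ Finset.Icc 1 k, y i * (a + c * b i)
      = (∑ i ∈ Finset.Icc 1 k, y i) * a + c * (∑ i ∈ Finset.Icc 1 k, b i * y i) := by
    intro y
    rw [Finset.sum_mul, Finset.mul_sum, ← Finset.sum_add_distrib]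
    apply Finset.sum_congr rfl
    intro i _
    ring
  -- nonzero residues
  have hres : ∀ r, 1 ≤ r → r ≤ q - 1 → 1 ≤ c * r % q ∧ c * r % q < q := by
    intro r h1 h2
    refine ⟨?_, Nat.mod_lt _ (by omega)⟩
    by_contra h
    have hdvd : q ∣ c * r := by omega
    have := (Nat.Coprime.dvd_of_dvd_mul_right (Nat.coprime_comm.mp hNcq)
      (by rwa [Nat.mul_comm] at hdvd : q ∣ r * c))
    have := Nat.le_of_dvd (by omega) this
    omega
  -- injectivity of r ↦ c*r % q
  have hinj : ∀ r r', 1 ≤ r → r ≤ q-1 → 1 ≤ r' → r' ≤ q-1 →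
      c * r % q = c * r' % q → r = r' := by
    intro r r' h1 h2 h3 h4 h5
    have h6 : r ≡ r' [MOD q] := Nat.ModEq.cancel_left_of_coprime (Nat.coprime_comm.mp hNcq) h5
    have h7 : r % q = r' % q := h6
    rw [Nat.mod_eq_of_lt (by omega), Nat.mod_eq_of_lt (by omega)] at h7
    exact h7
  -- surjectivity
  haveI : NeZero q := ⟨by omega⟩
  have hsurj : ∀ m, 1 ≤ m → m < q → ∃ r, 1 ≤ r ∧ r ≤ q-1 ∧ c * r % q = m := by
    intro m hm1 hm2
    set cu : (ZMod q)ˣ := ZMod.unitOfCoprime c hNcq with hcu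
    set zz : ZMod q := ((cu⁻¹ : (ZMod q)ˣ) : ZMod q) * (m : ZMod q) with hzz
    have hcr : ((c * zz.val : ℕ) : ZMod q) = ((m : ℕ) : ZMod q) := by
      push_cast
      rw [ZMod.natCast_val, ZMod.cast_id]
      rw [hzz, ← mul_assoc]
      have h1 : (c : ZMod q) = (cu : ZMod q) := (ZMod.coe_unitOfCoprime c hNcq).symm
      rw [h1]
      have h2 : (cu : ZMod q) * ((cu⁻¹ : (ZMod q)ˣ) : ZMod q) = 1 := by
        rw [← Units.val_mul, mul_inv_cancel, Units.val_one]
      rw [h2, one_mul]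
    have hmod : c * zz.val % q = m % q := (ZMod.natCast_eq_natCast_iff _ _ _).mp hcr
    rw [Nat.mod_eq_of_lt hm2] at hmod
    refine ⟨zz.val, ?_, by have := ZMod.val_lt zz; omega, hmod⟩
    by_contra h
    have h0 : zz.val = 0 := by omega
    rw [h0, Nat.mul_zero, Nat.zero_mod] at hmod
    omega
  -- condition in ℕ form
  have hcondN : (∑ i ∈ Finset.Icc 1 (k-1), s i) + 2 ≤ c + k := by
    have h1 : ((∑ i ∈ Finset.Icc 1 (k-1), s i : ℕ) : ℤ) + 2 ≤ (c:ℤ) + k := by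
      push_cast
      rw [hc]
      linarith
    exact_mod_cast h1
  -- r*p < a
  have hrpa : ∀ r, 1 ≤ r → r ≤ q - 1 → r * p < a := by
    intro r h1 h2
    have h3 : r * p ≤ (q-1) * p := Nat.mul_le_mul_right _ h2
    have h4 : (q-1) * p + 1 * p = a := by
      rw [← Nat.add_mul, (by omega : q - 1 + 1 = q), ← hq, Nat.mul_comm]
    omega
  -- KEY LEMMA
  have hkey : ∀ r, 1 ≤ r → r ≤ q - 1 → ∀ y : ℕ → ℕ, ∀ t : ℕ,
      (∑ i ∈ Finset.Icc 1 k, b i * y i) = r * p + t * a →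
      ∑ i ∈ Finset.Icc 1 k, x r i ≤ (∑ i ∈ Finset.Icc 1 k, y i) + c * t := by
    intro r hr1 hr2 y t hyv
    have hxr := hxsum r hr1 hr2
    rcases Nat.eq_zero_or_pos t with rfl | ht
    · -- greedy minimality
      have hg := (gsum_greedy b s k hk hb1 hbrec (x r) (hxle r hr1 hr2)
        (hxzero r hr1 hr2) k (by omega) le_rfl).2
      have hm := gsum_min b s k hk hb1 hbrec hs1 hsmono k (by omega) le_rfl y
      rw [hyv, (by ring : r * p + 0 * a = r * p)] at hm
      rw [hxr] at hg
      omega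
    · have hbk : 1 ≤ b k := bpos b s k hb1 hbrec k (by omega) le_rfl
      have h1 : b k * x r k ≤ r * p := by
        rw [← hxr]
        exact Finset.single_le_sum (f := fun i => b i * x r i)
          (fun i _ => Nat.zero_le _) (by simp only [Finset.mem_Icc]; omega)
      have h2 : (∑ i ∈ Finset.Icc 1 k, b i * y i) ≤ b k * (∑ i ∈ Finset.Icc 1 k, y i) := by
        rw [Finset.mul_sum]
        apply Finset.sum_le_sum
        intro i hi
        simp only [Finset.mem_Icc] at hi
        exact Nat.mul_le_mul_right _ (bmono b s k hk hb1 hbrec hs1 i k hi.1 hi.2 le_rfl)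
      have h3 : x r k ≤ ∑ i ∈ Finset.Icc 1 k, y i := by
        have h0 : 0 < t * a := by positivity
        exact Nat.le_of_mul_le_mul_left (by omega) (by omega : 0 < b k)
      have h4 : ∑ i ∈ Finset.Icc 1 (k-1), x r i ≤ c :=
        lowbound k c hk s (x r) (hxle r hr1 hr2) (hxzero r hr1 hr2) hs1 hcondN
      have h5 : ∑ i ∈ Finset.Icc 1 k, x r i
          = ∑ i ∈ Finset.Icc 1 (k-1), x r i + x r k := by
        have hk1 : k - 1 + 1 = k := by omega
        have h := Finset.sum_Icc_succ_top (show 1 ≤ k-1+1 by omega) (fun i => x r i)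
        rw [hk1] at h
        exact h
      have hct : c ≤ c * t := Nat.le_mul_of_pos_right _ ht
      omega
  -- bridge between ℤ-representations and ℕ-representations
  have hgen : ∀ i ∈ Finset.Icc 1 k, ((u : ℤ) * b i + 1) * a + d * b i
      = ((a + c * b i : ℕ) : ℤ) := by
    intro i _
    push_cast
    rw [hc]
    ring
  have hsum_eq : ∀ y : ℕ → ℕ,
      (∑ i ∈ Finset.Icc 1 k, (y i : ℤ) * (((u : ℤ) * b i + 1) * a + d * b i))
      = ((∑ i ∈ Finset.Icc 1 k, y i * (a + c * b i) : ℕ) : ℤ) := by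
    intro y
    rw [Nat.cast_sum]
    apply Finset.sum_congr rfl
    intro i hi
    rw [hgen i hi]
    push_cast
    ring
  have hZN : ∀ n : ℕ, (∃ y : ℕ → ℕ, (p * n : ℤ) = (y 0 : ℤ) * a +
        ∑ i ∈ Finset.Icc 1 k, (y i : ℤ) * (((u : ℤ) * b i + 1) * a + d * b i))
      ↔ (∃ y : ℕ → ℕ, p * n = y 0 * a + ∑ i ∈ Finset.Icc 1 k, y i * (a + c * b i)) := by
    intro n
    constructor
    · rintro ⟨y, hy⟩
      refine ⟨y, ?_⟩
      rw [hsum_eq y] at hy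
      exact_mod_cast hy
    · rintro ⟨y, hy⟩
      refine ⟨y, ?_⟩
      rw [hsum_eq y]
      exact_mod_cast congrArg (fun t : ℕ => (t : ℤ)) hy
  -- the W-splitting identity
  have hWsplit : ∀ r : ℕ, c * (r * p) = p * (c * r % q) + (c * r / q) * a := by
    intro r
    have h1 := Nat.div_add_mod (c * r) q
    calc c * (r * p) = (c * r) * p := by ring
    _ = (q * (c * r / q) + c * r % q) * p := by rw [h1]
    _ = p * (c * r % q) + (c * r / q) * (p * q) := by ring
    _ = _ := by rw [hq]
  -- the finite set of gaps
  set F : Finset ℕ := (Finset.Icc 1 (q-1)).biUnion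
      (fun r => (Finset.range ((∑ i ∈ Finset.Icc 1 k, x r i) + c * r / q)).image
        (fun j => c * r % q + j * q)) with hF
  have hmemF : ∀ n, n ∈ F ↔ ∃ r, (1 ≤ r ∧ r ≤ q-1) ∧
      ∃ j, j < (∑ i ∈ Finset.Icc 1 k, x r i) + c * r / q ∧ n = c * r % q + j * q := by
    intro n
    simp only [hF, Finset.mem_biUnion, Finset.mem_Icc, Finset.mem_image, Finset.mem_range]
    constructor
    · rintro ⟨r, hr, j, hj, hn⟩; exact ⟨r, hr, j, hj, hn.symm⟩
    · rintro ⟨r, hr, j, hj, hn⟩; exact ⟨r, hr, j, hj, hn.symm⟩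
  -- main set identification
  have hset : {n : ℕ | 0 < n ∧ ¬ ∃ y : ℕ → ℕ,
      p * n = y 0 * a + ∑ i ∈ Finset.Icc 1 k, y i * (a + c * b i)} = ↑F := by
    ext n
    simp only [Set.mem_setOf_eq, Finset.mem_coe, hmemF n]
    constructor
    · rintro ⟨hn0, hnrep⟩
      have hm0 : ¬ (n % q = 0) := by
        intro h0
        apply hnrep
        refine ⟨fun i => if i = 0 then n / q else 0, ?_⟩
        have hsum0 : ∑ i ∈ Finset.Icc 1 k,
            (if i = 0 then n / q else 0) * (a + c * b i) = 0 := by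
          apply Finset.sum_eq_zero
          intro i hi
          simp only [Finset.mem_Icc] at hi
          rw [if_neg (by omega)]
          ring
        rw [hsum0]
        simp only [reduceIte, Nat.add_zero]
        have h1 := Nat.div_add_mod n q
        rw [h0, Nat.add_zero] at h1
        calc p * n = p * (q * (n / q)) := by rw [h1]
        _ = (n / q) * a := by rw [← hq]; ring
      have hm1 : 1 ≤ n % q := by omega
      have hmq : n % q < q := Nat.mod_lt _ (by omega)
      obtain ⟨r, hr1, hr2, hrm⟩ := hsurj (n % q) hm1 hmq
      refine ⟨r, ⟨hr1, hr2⟩, n / q, ?_, ?_⟩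
      · by_contra hge
        push_neg at hge
        apply hnrep
        refine ⟨fun i => if i = 0 then (n / q - ((∑ i ∈ Finset.Icc 1 k, x r i) + c * r / q))
          else x r i, ?_⟩
        have hsx : ∑ i ∈ Finset.Icc 1 k,
            (if i = 0 then (n / q - ((∑ i ∈ Finset.Icc 1 k, x r i) + c * r / q))
              else x r i) * (a + c * b i)
            = ∑ i ∈ Finset.Icc 1 k, x r i * (a + c * b i) := by
          apply Finset.sum_congr rfl
          intro i hi
          simp only [Finset.mem_Icc] at hi
          rw [if_neg (by omega)]
        rw [hsx]
        simp only [reduceIte]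
        rw [hexp (x r), hxsum r hr1 hr2]
        have h1 := Nat.div_add_mod n q
        have h10 := hWsplit r
        rw [hrm] at h10
        have h2 : (n / q - ((∑ i ∈ Finset.Icc 1 k, x r i) + c * r / q)) * a
            = (n / q) * a - ((∑ i ∈ Finset.Icc 1 k, x r i) + c * r / q) * a :=
          Nat.sub_mul _ _ _
        have h3 : ((∑ i ∈ Finset.Icc 1 k, x r i) + c * r / q) * a ≤ (n / q) * a :=
          Nat.mul_le_mul_right _ hge
        have h4 : p * n = p * (n % q) + (n / q) * a := by
          calc p * n = p * (q * (n / q) + n % q) := by rw [h1]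
          _ = p * (n % q) + (n / q) * (p * q) := by ring
          _ = _ := by rw [hq]
        have h5 : ((∑ i ∈ Finset.Icc 1 k, x r i) + c * r / q) * a
            = (∑ i ∈ Finset.Icc 1 k, x r i) * a + (c * r / q) * a := by ring
        omega
      · rw [hrm]
        have h1 := Nat.div_add_mod n q
        have h2 : q * (n / q) = (n / q) * q := Nat.mul_comm _ _
        omega
    · rintro ⟨r, ⟨hr1, hr2⟩, j, hj, rfl⟩
      have hm1 : 1 ≤ c * r % q := (hres r hr1 hr2).1
      refine ⟨by omega, ?_⟩
      rintro ⟨y, hy⟩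
      rw [hexp y] at hy
      have e1 : p * (c * r % q + j * q) % a
          = (c * (∑ i ∈ Finset.Icc 1 k, b i * y i)) % a := by
        have h0 : y 0 * a + ((∑ i ∈ Finset.Icc 1 k, y i) * a
              + c * (∑ i ∈ Finset.Icc 1 k, b i * y i))
            = c * (∑ i ∈ Finset.Icc 1 k, b i * y i)
              + (y 0 + ∑ i ∈ Finset.Icc 1 k, y i) * a := by ring
        rw [hy, h0, Nat.add_mul_mod_self_right]
      have e2 : p * (c * r % q + j * q) % a = (p * (c * r % q)) % a := by
        have h0 : p * (c * r % q + j * q) = p * (c * r % q) + j * a := by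
          rw [← hq]; ring
        rw [h0, Nat.add_mul_mod_self_right]
      have e3 : (p * (c * r % q)) % a = (c * (r * p)) % a := by
        rw [hWsplit r, Nat.add_mul_mod_self_right]
      have e4 : (∑ i ∈ Finset.Icc 1 k, b i * y i) % a = (r * p) % a := by
        have h5 : (c * (∑ i ∈ Finset.Icc 1 k, b i * y i)) % a = (c * (r * p)) % a := by
          rw [← e1, e2, e3]
        exact Nat.ModEq.cancel_left_of_coprime (Nat.coprime_comm.mp hNca) h5
      have hrp := hrpa r hr1 hr2
      have e5 : (∑ i ∈ Finset.Icc 1 k, b i * y i) % a = r * p := by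
        rw [e4, Nat.mod_eq_of_lt hrp]
      have e6 : (∑ i ∈ Finset.Icc 1 k, b i * y i)
          = r * p + ((∑ i ∈ Finset.Icc 1 k, b i * y i) / a) * a := by
        have h6 := Nat.div_add_mod (∑ i ∈ Finset.Icc 1 k, b i * y i) a
        have h7 : a * ((∑ i ∈ Finset.Icc 1 k, b i * y i) / a)
            = ((∑ i ∈ Finset.Icc 1 k, b i * y i) / a) * a := Nat.mul_comm _ _
        omega
      have hkk := hkey r hr1 hr2 y ((∑ i ∈ Finset.Icc 1 k, b i * y i) / a) e6
      -- upper bound: p*n < W r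
      have h8 : p * (c * r % q + j * q) = p * (c * r % q) + j * a := by
        rw [← hq]; ring
      have h9 : (j + 1) * a ≤ ((∑ i ∈ Finset.Icc 1 k, x r i) + c * r / q) * a :=
        Nat.mul_le_mul_right _ (by omega)
      have h10 := hWsplit r
      have h11 : (j + 1) * a = j * a + a := by ring
      have h12 : ((∑ i ∈ Finset.Icc 1 k, x r i) + c * r / q) * a
          = (∑ i ∈ Finset.Icc 1 k, x r i) * a + (c * r / q) * a := by ring
      -- lower bound: p*n ≥ W r
      have h13 : c * (∑ i ∈ Finset.Icc 1 k, b i * y i)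
          = c * (r * p) + (c * ((∑ i ∈ Finset.Icc 1 k, b i * y i) / a)) * a := by
        conv_lhs => rw [e6]
        ring
      have h14 : (∑ i ∈ Finset.Icc 1 k, x r i) * a
          ≤ ((∑ i ∈ Finset.Icc 1 k, y i) + c * ((∑ i ∈ Finset.Icc 1 k, b i * y i) / a)) * a :=
        Nat.mul_le_mul_right _ hkk
      have h15 : ((∑ i ∈ Finset.Icc 1 k, y i) + c * ((∑ i ∈ Finset.Icc 1 k, b i * y i) / a)) * a
          = (∑ i ∈ Finset.Icc 1 k, y i) * a
            + (c * ((∑ i ∈ Finset.Icc 1 k, b i * y i) / a)) * a := by ring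
      omega
  -- disjointness and cardinality
  have hdisj : ∀ r1 ∈ Finset.Icc 1 (q-1), ∀ r2 ∈ Finset.Icc 1 (q-1), r1 ≠ r2 →
      Disjoint ((Finset.range ((∑ i ∈ Finset.Icc 1 k, x r1 i) + c * r1 / q)).image
          (fun j => c * r1 % q + j * q))
        ((Finset.range ((∑ i ∈ Finset.Icc 1 k, x r2 i) + c * r2 / q)).image
          (fun j => c * r2 % q + j * q)) := by
    intro r1 h1 r2 h2 hne
    simp only [Finset.mem_Icc] at h1 h2
    rw [Finset.disjoint_left]
    rintro nn hn1 hn2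
    simp only [Finset.mem_image, Finset.mem_range] at hn1 hn2
    obtain ⟨j1, _, e1⟩ := hn1
    obtain ⟨j2, _, e2⟩ := hn2
    apply hne
    apply hinj r1 r2 h1.1 h1.2 h2.1 h2.2
    have hm1 : c * r1 % q < q := Nat.mod_lt _ (by omega)
    have hm2 : c * r2 % q < q := Nat.mod_lt _ (by omega)
    have f1 : nn % q = c * r1 % q := by
      rw [← e1, Nat.add_mul_mod_self_right, Nat.mod_eq_of_lt hm1]
    have f2 : nn % q = c * r2 % q := by
      rw [← e2, Nat.add_mul_mod_self_right, Nat.mod_eq_of_lt hm2]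
    omega
  have hcard : F.card = ∑ r ∈ Finset.Icc 1 (q-1),
      ((∑ i ∈ Finset.Icc 1 k, x r i) + c * r / q) := by
    rw [hF, Finset.card_biUnion hdisj]
    apply Finset.sum_congr rfl
    intro r _
    rw [Finset.card_image_of_injective _ ?_, Finset.card_range]
    intro j1 j2 h
    simp only at h
    have h' : j1 * q = j2 * q := by omega
    exact Nat.eq_of_mul_eq_mul_right (by omega) h'
  -- the reflection identity for the floor sums
  have hpair : ∀ r, 1 ≤ r → r ≤ q-1 → c * r / q + c * (q - r) / q = c - 1 := by
    intro r h1 h2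
    have hB1 : 1 ≤ c * r % q := (hres r h1 h2).1
    have hBq : c * r % q < q := Nat.mod_lt _ (by omega)
    have hdm := Nat.div_add_mod (c * r) q
    have hAc : c * r / q + 1 ≤ c := by
      by_contra hcon
      push_neg at hcon
      have h3 : c * q ≤ q * (c * r / q) := by
        calc c * q = q * c := Nat.mul_comm _ _
        _ ≤ q * (c * r / q) := Nat.mul_le_mul_left _ (by omega)
      have h4 : c * r ≤ c * (q - 1) := Nat.mul_le_mul_left _ (by omega)
      have h5 : c * (q - 1) + c = c * q := by
        rw [← Nat.mul_succ]
        congr 1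
        omega
      omega
    have he : c * (q - r) = (q - c * r % q) + (c - c * r / q - 1) * q := by
      have h6 : c * (q - r) + c * r = c * q := by
        rw [← Nat.mul_add, (by omega : q - r + r = q)]
      have h7 : (c - c * r / q - 1) * q = c * q - (c * r / q) * q - 1 * q := by
        rw [Nat.sub_mul, Nat.sub_mul]
      have h8 : (c * r / q) * q = q * (c * r / q) := Nat.mul_comm _ _
      have h11 : (c * r / q + 1) * q ≤ c * q := Nat.mul_le_mul_right _ hAc
      have h12 : (c * r / q + 1) * q = (c * r / q) * q + q := by ring
      omega
    have hdiv : c * (q - r) / q = c - c * r / q - 1 := by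
      rw [he, Nat.add_mul_div_right _ _ (by omega : 0 < q),
        Nat.div_eq_of_lt (by omega : q - c * r % q < q), Nat.zero_add]
    omega
  have hrefl : ∑ r ∈ Finset.Icc 1 (q-1), c * (q - r) / q
      = ∑ r ∈ Finset.Icc 1 (q-1), c * r / q := by
    apply Finset.sum_nbij' (i := fun r => q - r) (j := fun r => q - r)
    · intro r hr
      simp only [Finset.mem_Icc] at hr ⊢
      omega
    · intro r hr
      simp only [Finset.mem_Icc] at hr ⊢
      omega
    · intro r hr
      simp only [Finset.mem_Icc] at hr
      omega
    · intro r hr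
      simp only [Finset.mem_Icc] at hr
      omega
    · intro r hr
      rfl
  have hsum2 : 2 * (∑ r ∈ Finset.Icc 1 (q-1), c * r / q) = (c - 1) * (q - 1) := by
    have h1 : ∑ r ∈ Finset.Icc 1 (q-1), (c * r / q + c * (q - r) / q)
        = ∑ r ∈ Finset.Icc 1 (q-1), (c - 1) := by
      apply Finset.sum_congr rfl
      intro r hr
      simp only [Finset.mem_Icc] at hr
      exact hpair r hr.1 hr.2
    rw [Finset.sum_add_distrib, hrefl, Finset.sum_const, Nat.card_Icc, smul_eq_mul,
      (by omega : q - 1 + 1 - 1 = q - 1)] at h1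
    have hcomm : (q-1)*(c-1) = (c-1)*(q-1) := Nat.mul_comm _ _
    omega
  -- final assembly
  have hsetfull : {n : ℕ | 0 < n ∧ ¬ ∃ y : ℕ → ℕ, (p * n : ℤ) = (y 0 : ℤ) * a +
        ∑ i ∈ Finset.Icc 1 k, (y i : ℤ) * (((u : ℤ) * b i + 1) * a + d * b i)} = ↑F := by
    rw [← hset]
    ext n
    simp only [Set.mem_setOf_eq]
    constructor
    · rintro ⟨h1, h2⟩
      exact ⟨h1, fun hcc => h2 ((hZN n).mpr hcc)⟩
    · rintro ⟨h1, h2⟩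
      exact ⟨h1, fun hcc => h2 ((hZN n).mp hcc)⟩
  rw [hsetfull, Set.ncard_coe_finset, hcard]
  have hsplitsum : ∑ r ∈ Finset.Icc 1 (q-1),
      ((∑ i ∈ Finset.Icc 1 k, x r i) + c * r / q)
      = (∑ r ∈ Finset.Icc 1 (q-1), (∑ i ∈ Finset.Icc 1 k, x r i))
        + ∑ r ∈ Finset.Icc 1 (q-1), c * r / q := Finset.sum_add_distrib
  rw [hsplitsum]
  have hfin1 : ((u:ℤ) * a + d - 1) = ((c:ℕ):ℤ) - 1 := by rw [hc]
  have hfin2 : (((c - 1) * (q - 1) : ℕ) : ℤ) = (((c:ℕ):ℤ) - 1) * (((q:ℕ):ℤ) - 1) := by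
    push_cast [Nat.cast_sub (by omega : 1 ≤ c), Nat.cast_sub (by omega : 1 ≤ q)]
    ring
  have hfin3 := congrArg (fun t : ℕ => (t : ℤ)) hsum2
  push_cast at hfin3 ⊢
  rw [hfin1]
  rw [Nat.cast_sub (by omega : 1 ≤ c), Nat.cast_sub (by omega : 1 ≤ q)] at hfin3
  push_cast at hfin3
  linarith
end

section
/- Let A = (a, (u+1)*a + d, ((s+1)*u + 1)*a + (s+1)*d), where d is a positive integer, gcd(a, d) = 1, a ≥ 2, u is a positive integer, and u + 1 ≥ s ≥ 1. Let p be a positive divisor of a with p ≠ a. Then the Frobenius number of the quotient is F(⟨A⟩/p) = (a − p − s*⌊(a−p)/(s+1)⌋) * (a/p) + (a/p − 1)*(u*a + d) − a/p. -/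
private def fQ (u s t : ℕ) : ℕ := u * t + t / (s + 1) + t % (s + 1)

private lemma divmod_eq (s k r x : ℕ) (hr : r < s + 1) (hx : x = (s+1)*k + r) :
    x / (s+1) = k ∧ x % (s+1) = r := by
  subst hx
  constructor
  · rw [Nat.mul_add_div (Nat.succ_pos s), Nat.div_eq_of_lt hr]; omega
  · rw [Nat.mul_add_mod, Nat.mod_eq_of_lt hr]

private lemma fQ_mono (u s : ℕ) (hsu : s ≤ u + 1) : Monotone (fQ u s) := by
  apply monotone_nat_of_le_succ
  intro t
  unfold fQ
  have hdm := Nat.div_add_mod t (s+1)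
  have h1 : t % (s+1) < s + 1 := Nat.mod_lt _ (Nat.succ_pos s)
  have h3 : u * (t+1) = u * t + u := by ring
  rcases Nat.lt_or_ge (t % (s+1)) s with h | h
  · obtain ⟨hq, hm⟩ := divmod_eq s (t/(s+1)) (t % (s+1) + 1) (t+1) (by omega) (by omega)
    rw [hq, hm, h3]; omega
  · have heq : t % (s+1) = s := by omega
    obtain ⟨hq, hm⟩ := divmod_eq s (t/(s+1) + 1) 0 (t+1) (by omega) (by
      have e : (s+1)*(t/(s+1)+1) = (s+1)*(t/(s+1)) + (s+1) := by ring
      omega)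
    rw [hq, hm, h3]; omega

private lemma mem_iff (a u s d m : ℕ) :
    (∃ x y w : ℕ, m = x * a + y * ((u + 1) * a + d) + w * (((s + 1) * u + 1) * a + (s + 1) * d))
    ↔ ∃ t m' : ℕ, m = m' * a + t * d ∧ fQ u s t ≤ m' := by
  constructor
  · rintro ⟨x, y, w, rfl⟩
    refine ⟨y + (s+1)*w, x + y*(u+1) + w*((s+1)*u+1), by ring, ?_⟩
    set t := y + (s+1)*w with ht
    have hc : (s+1)*w = w*(s+1) := by ring
    have hw : w * (s+1) ≤ t := by omega
    have hw' : w ≤ t / (s+1) := (Nat.le_div_iff_mul_le (Nat.succ_pos s)).mpr hw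
    have hdm : (s+1) * (t / (s+1)) + t % (s+1) = t := Nat.div_add_mod t (s+1)
    have hsw : s * w ≤ s * (t / (s+1)) := Nat.mul_le_mul_left s hw'
    have hrhs : x + y*(u+1) + w*((s+1)*u+1) = x + (y + w) + u * t := by rw [ht]; ring
    rw [hrhs]
    show u * t + t / (s+1) + t % (s+1) ≤ _
    have e1 : (s+1) * (t / (s+1)) = s * (t/(s+1)) + t/(s+1) := by ring
    have e2 : (s+1) * w = s * w + w := by ring
    omega
  · rintro ⟨t, m', rfl, hm⟩
    refine ⟨m' - fQ u s t, t % (s+1), t / (s+1), ?_⟩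
    have hdm : (s+1) * (t / (s+1)) + t % (s+1) = t := Nat.div_add_mod t (s+1)
    have hf : fQ u s t = u*t + t/(s+1) + t%(s+1) := rfl
    have hx : m' - fQ u s t + (t % (s+1) + t/(s+1) + u*t) = m' := by omega
    have expand : (m' - fQ u s t) * a + (t % (s+1)) * ((u+1)*a+d)
        + (t/(s+1)) * (((s+1)*u+1)*a + (s+1)*d)
        = (m' - fQ u s t + (t % (s+1) + t/(s+1) + u*((s+1)*(t/(s+1)) + t % (s+1)))) * a
          + ((s+1)*(t/(s+1)) + t % (s+1)) * d := by ring
    rw [expand, hdm, hx]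



/-- For `A = (a, (u+1)a + d, ((s+1)u + 1)a + (s+1)d)` with `d ≥ 1`,
`gcd(a,d) = 1`, `a ≥ 2`, `u + 1 ≥ s ≥ 1`, and `p` a positive divisor of `a`, `p ≠ a`:
`F(⟨A⟩/p) = (a − p − s·⌊(a−p)/(s+1)⌋)·(a/p) + (a/p − 1)·(u·a + d) − a/p`. -/
theorem stmt_8 (a u s d p : ℕ)
    (ha : 2 ≤ a) (hd : 1 ≤ d) (hu : 1 ≤ u) (hs : 1 ≤ s) (hsu : s ≤ u + 1)
    (hgcd : Nat.gcd a d = 1)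
    (hp : 0 < p) (hpa : p ∣ a) (hpne : p ≠ a) :
    IsGreatest {z : ℤ | ¬ ∃ n : ℕ, (n : ℤ) = z ∧ ∃ x y w : ℕ,
        p * n = x * a + y * ((u + 1) * a + d) +
          w * (((s + 1) * u + 1) * a + (s + 1) * d)}
      (((a : ℤ) - p - s * (((a - p) / (s + 1) : ℕ) : ℤ)) * ((a / p : ℕ) : ℤ) +
        (((a / p : ℕ) : ℤ) - 1) * ((u : ℤ) * a + d) - ((a / p : ℕ) : ℤ)) := by
  obtain ⟨q, rfl⟩ := hpa
  have hq2 : 2 ≤ q := by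
    rcases Nat.lt_or_ge q 2 with h | h
    · interval_cases q <;> omega
    · exact h
  have hA : p ≤ p * q := Nat.le_mul_of_pos_right p (by omega)
  have hdiv : p * q / p = q := Nat.mul_div_cancel_left q hp
  rw [hdiv]
  set t₁ := p * q - p with ht₁def
  have ht₁ : t₁ = p * (q - 1) := by
    have h : p * (q - 1) + p * 1 = p * q := by
      rw [← Nat.mul_add]; congr 1; omega
    omega
  have ht₁pos : 1 ≤ t₁ := by
    have h2p : p * 2 ≤ p * q := Nat.mul_le_mul_left p hq2
    omega
  have hfq : ∀ t, fQ u s t = u*t + t/(s+1) + t%(s+1) := fun _ => rfl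
  set f₁ := fQ u s t₁ with hf₁def
  have hf₁pos : 1 ≤ f₁ := by
    have h1 : 1 ≤ u * t₁ := Nat.mul_pos hu ht₁pos
    calc 1 ≤ u * t₁ := h1
      _ ≤ u * t₁ + t₁/(s+1) := Nat.le_add_right _ _
      _ ≤ u * t₁ + t₁/(s+1) + t₁%(s+1) := Nat.le_add_right _ _
      _ = f₁ := (hfq t₁).symm
  set Fn := (q-1)*d + (f₁ - 1)*q with hFndef
  have hW : (s+1) * (t₁/(s+1)) + t₁ % (s+1) = t₁ := Nat.div_add_mod t₁ (s+1)
  have ht₁z : (t₁:ℤ) = (p:ℤ)*q - p := by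
    rw [ht₁def]; push_cast [Nat.cast_sub hA]; ring
  have hWz : ((s:ℤ)+1) * ((t₁/(s+1) : ℕ):ℤ) + ((t₁ % (s+1) : ℕ):ℤ) = (p:ℤ)*q - p := by
    rw [← ht₁z]; exact_mod_cast hW
  have hf₁z : (f₁:ℤ) = (u:ℤ)*t₁ + ((t₁/(s+1) : ℕ):ℤ) + ((t₁ % (s+1) : ℕ):ℤ) := by
    rw [hf₁def, hfq t₁]; simp only [Nat.cast_add, Nat.cast_mul]
  have hFnz : (Fn:ℤ) = ((q:ℤ)-1)*d + ((f₁:ℤ)-1)*q := by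
    rw [hFndef]; push_cast [Nat.cast_sub hf₁pos, Nat.cast_sub (by omega : 1 ≤ q)]; ring
  have hval : (((p*q:ℕ) : ℤ) - (p:ℤ) - (s:ℤ) * ((t₁ / (s + 1) : ℕ) : ℤ)) * (q : ℤ) +
      ((q : ℤ) - 1) * ((u : ℤ) * ((p*q:ℕ):ℤ) + (d:ℤ)) - (q:ℤ) = (Fn : ℤ) := by
    rw [hFnz, hf₁z, ht₁z, Nat.cast_mul]
    linear_combination (-(q:ℤ)) * hWz
  rw [hval]
  clear_value t₁ f₁ Fn
  constructor
  · -- Fn is a gap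
    rintro ⟨n, hn, x, y, w, hrep⟩
    have hnF : n = Fn := by exact_mod_cast hn
    subst hnF
    have hrepN : p * n = x * (p*q) + y * ((u+1)*(p*q) + d) + w * (((s+1)*u+1)*(p*q) + (s+1)*d) := by
      exact_mod_cast hrep
    obtain ⟨t, m', heq, hfm⟩ := (mem_iff (p*q) u s d (p*n)).mp ⟨x, y, w, hrepN⟩
    have heqZ : (p:ℤ) * n = (m':ℤ) * ((p:ℤ)*q) + (t:ℤ) * d := by exact_mod_cast heq
    have hFz : (p:ℤ) * n = (t₁:ℤ) * d + ((f₁:ℤ) - 1) * ((p:ℤ)*q) := by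
      rw [hFnz, ht₁z]; push_cast [Nat.cast_sub hf₁pos]; ring
    have hpq0 : (0:ℤ) < (p:ℤ) * q := by exact_mod_cast Nat.mul_pos hp (by omega : 0 < q)
    have hdvd : ((p:ℤ)*q) ∣ ((t:ℤ) - t₁) * d := ⟨(f₁:ℤ) - 1 - m', by linear_combination hFz - heqZ⟩
    have hcop : IsCoprime ((p:ℤ)*q) (d:ℤ) := by
      rw [show ((p:ℤ)*q) = ((p*q:ℕ):ℤ) by push_cast; ring]
      exact Nat.isCoprime_iff_coprime.mpr hgcd
    obtain ⟨k, hk⟩ := hcop.dvd_of_dvd_mul_right hdvd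
    have ht0 : (0:ℤ) ≤ t := Int.natCast_nonneg t
    have hpz : (0:ℤ) < p := by exact_mod_cast hp
    have hk0 : 0 ≤ k := by
      by_contra hneg; push_neg at hneg
      have hk1 : k ≤ -1 := by omega
      have h6 : ((p:ℤ)*q) * k ≤ ((p:ℤ)*q) * (-1) := mul_le_mul_of_nonneg_left hk1 (le_of_lt hpq0)
      rw [← hk] at h6
      linarith [ht₁z]
    have hm'k : (m':ℤ) = (f₁:ℤ) - 1 - k * d := by
      have h2 : ((p:ℤ)*q) * m' = ((p:ℤ)*q) * ((f₁:ℤ) - 1 - k*d) := by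
        linear_combination hFz - heqZ - (d:ℤ) * hk
      exact mul_left_cancel₀ (ne_of_gt hpq0) h2
    have httZ : (t₁:ℤ) ≤ t := by
      have h7 : 0 ≤ (p:ℤ)*q*k := mul_nonneg (le_of_lt hpq0) hk0
      linarith [hk]
    have htt : t₁ ≤ t := by exact_mod_cast httZ
    have hmono : f₁ ≤ fQ u s t := by rw [hf₁def]; exact fQ_mono u s hsu htt
    have h3 : (fQ u s t : ℤ) ≤ m' := by exact_mod_cast hfm
    have h4 : (f₁:ℤ) ≤ fQ u s t := by exact_mod_cast hmono
    have h5 : 0 ≤ k * d := mul_nonneg hk0 (Int.natCast_nonneg d)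
    linarith
  · -- upper bound
    intro z hz
    by_contra hgt; push_neg at hgt
    have hz0 : 0 ≤ z := le_trans (Int.natCast_nonneg Fn) (le_of_lt hgt)
    obtain ⟨n, rfl⟩ : ∃ n : ℕ, (n:ℤ) = z := ⟨z.toNat, Int.toNat_of_nonneg hz0⟩
    apply hz
    have hpq1 : 1 < p * q := by omega
    have hco : Nat.Coprime d (p*q) := Nat.coprime_comm.mp hgcd
    obtain ⟨e, -, he⟩ := Nat.exists_mul_mod_eq_one_of_coprime hco hpq1
    set t₀ := (p*n*e) % (p*q) with ht₀def
    have ht₀lt : t₀ < p*q := Nat.mod_lt _ (by omega)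
    have hde : d * e ≡ 1 [MOD p*q] := by
      show d*e % (p*q) = 1 % (p*q)
      rw [he, Nat.mod_eq_of_lt hpq1]
    have hme : t₀ * d ≡ p * n [MOD p*q] := by
      calc t₀ * d ≡ (p*n*e) * d [MOD p*q] := (Nat.mod_modEq _ _).mul_right d
        _ = (p*n) * (d*e) := by ring
        _ ≡ (p*n) * 1 [MOD p*q] := Nat.ModEq.mul_left _ hde
        _ = p*n := by ring
    clear_value t₀
    have hpd : Nat.Coprime p d := Nat.Coprime.coprime_dvd_left (dvd_mul_right p q) hgcd
    have hpt : p ∣ t₀ := by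
      have h1 : t₀ * d ≡ p*n [MOD p] := hme.of_dvd (dvd_mul_right p q)
      have h0 : p*n ≡ 0 [MOD p] := Nat.modEq_zero_iff_dvd.mpr (dvd_mul_right p n)
      have h2 : p ∣ t₀ * d := Nat.modEq_zero_iff_dvd.mp (h1.trans h0)
      exact hpd.dvd_of_dvd_mul_right h2
    obtain ⟨τ, hτ⟩ := hpt
    have hτq : τ ≤ q - 1 := by
      by_contra hh; push_neg at hh
      have : p * q ≤ p * τ := Nat.mul_le_mul_left p (by omega)
      omega
    have ht₀t₁ : t₀ ≤ t₁ := by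
      rw [hτ, ht₁]; exact Nat.mul_le_mul_left p hτq
    have hft : fQ u s t₀ ≤ f₁ := by rw [hf₁def]; exact fQ_mono u s hsu ht₀t₁
    have hqz : (0:ℤ) < q := by exact_mod_cast (by omega : 0 < q)
    have hdz : (0:ℤ) ≤ d := Int.natCast_nonneg d
    have hτz : (τ:ℤ) ≤ (q:ℤ) - 1 := by
      have h7 := (Nat.cast_le (α := ℤ)).mpr hτq
      rw [Nat.cast_sub (by omega : 1 ≤ q)] at h7; exact_mod_cast h7
    have hgb : (τ:ℤ)*d + ((fQ u s t₀ : ℤ) - 1)*q ≤ (Fn:ℤ) := by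
      rw [hFnz]
      have h1 : (τ:ℤ)*d ≤ ((q:ℤ)-1)*d := mul_le_mul_of_nonneg_right hτz hdz
      have h2 : ((fQ u s t₀:ℤ)-1)*q ≤ ((f₁:ℤ)-1)*q := by
        apply mul_le_mul_of_nonneg_right _ (le_of_lt hqz)
        have h8 : (fQ u s t₀:ℤ) ≤ f₁ := by exact_mod_cast hft
        linarith
      linarith
    obtain ⟨j, hj⟩ := hme.dvd
    have hτ₀z : (t₀:ℤ) = p * τ := by exact_mod_cast hτ
    have hjq : (n:ℤ) - τ*d = q * j := by
      have hp0 : (p:ℤ) ≠ 0 := by exact_mod_cast hp.ne'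
      apply mul_left_cancel₀ hp0
      push_cast at hj
      linear_combination hj + (d:ℤ) * hτ₀z
    have hjge : (fQ u s t₀ : ℤ) ≤ j := by
      have h5 : ((fQ u s t₀:ℤ) - 1) * q < q * j := by linarith [hgt]
      have h6 : (q:ℤ) * ((fQ u s t₀:ℤ)-1) < q * j := by linarith
      have h7 := lt_of_mul_lt_mul_left h6 (le_of_lt hqz)
      linarith
    have hjnn : (0:ℤ) ≤ j := le_trans (Int.natCast_nonneg _) hjge
    obtain ⟨m', hm'⟩ : ∃ m' : ℕ, (m':ℤ) = j := ⟨j.toNat, Int.toNat_of_nonneg hjnn⟩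
    have hrepN : p * n = m' * (p*q) + t₀ * d := by
      have h9 : ((p*n:ℕ):ℤ) = ((m' * (p*q) + t₀*d : ℕ):ℤ) := by
        push_cast at hj ⊢
        rw [hm']
        linear_combination hj
      exact_mod_cast h9
    have hfm' : fQ u s t₀ ≤ m' := by
      have h9 : (fQ u s t₀:ℤ) ≤ (m':ℤ) := by rw [hm']; exact hjge
      exact_mod_cast h9
    obtain ⟨x, y, w, hxyw⟩ := (mem_iff (p*q) u s d (p*n)).mpr ⟨t₀, m', hrepN, hfm'⟩
    exact ⟨n, rfl, x, y, w, by exact_mod_cast hxyw⟩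
end

section
/- Let A = (a, (u+1)*a + d, (3u+1)*a + 3d, (10u+1)*a + 10d), where d is a positive integer, gcd(a, d) = 1, u ≥ 2, and a ≥ 2. Let p be a positive divisor of a with p ≠ a. Then the Frobenius number of the quotient is F(⟨A⟩/p) = (a/p) * (⌊(a−p)/10⌋ + u*a + d + φ_1((a−p) mod 10)) − (u*a + d), where φ_1(0), φ_1(1), ..., φ_1(9) equal −1, 0, 1, 0, 1, 2, 1, 2, 3, 2 respectively. -/
def mu (t : ℕ) : ℕ := t / 10 + (t % 10) / 3 + (t % 10) % 3

lemma mu_spec1 (t : ℕ) : ∃ y v w : ℕ, y + 3*v + 10*w = t ∧ y + v + w = mu t :=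
  ⟨t % 10 % 3, t % 10 / 3, t / 10, by omega, by unfold mu; omega⟩

lemma mu_eq (k r : ℕ) (h : r < 10) : mu (10*k + r) = k + r/3 + r%3 := by unfold mu; omega

lemma mu_add3 (t : ℕ) : mu (t+3) ≤ mu t + 1 := by
  obtain ⟨k, r, hr, rfl⟩ : ∃ k r, r < 10 ∧ t = 10*k + r := ⟨t/10, t%10, by omega, by omega⟩
  rcases Nat.lt_or_ge r 7 with h | h
  · rw [mu_eq k r hr, show 10*k + r + 3 = 10*k + (r+3) by ring, mu_eq k (r+3) (by omega)]
    interval_cases r <;> simp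
  · rw [mu_eq k r hr, show 10*k + r + 3 = 10*(k+1) + (r-7) by omega, mu_eq (k+1) (r-7) (by omega)]
    interval_cases r <;> omega

lemma mu_succ (t : ℕ) : mu (t+1) ≤ mu t + 1 := by
  obtain ⟨k, r, hr, rfl⟩ : ∃ k r, r < 10 ∧ t = 10*k + r := ⟨t/10, t%10, by omega, by omega⟩
  rcases Nat.lt_or_ge r 9 with h | h
  · rw [mu_eq k r hr, show 10*k + r + 1 = 10*k + (r+1) by ring, mu_eq k (r+1) (by omega)]
    interval_cases r <;> simp
  · rw [mu_eq k r hr, show 10*k + r + 1 = 10*(k+1) + 0 by omega, mu_eq (k+1) 0 (by omega)]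
    interval_cases r <;> omega

lemma mu_spec2 (y v w : ℕ) : mu (y + 3*v + 10*w) ≤ y + v + w := by
  induction w with
  | zero =>
    induction v with
    | zero =>
      induction y with
      | zero => simp [mu]
      | succ y ih =>
        have := mu_succ (y + 3*0 + 10*0)
        rw [show y + 1 + 3*0 + 10*0 = (y + 3*0 + 10*0) + 1 by ring]
        omega
    | succ v ih =>
      have := mu_add3 (y + 3*v + 10*0)
      rw [show y + 3*(v+1) + 10*0 = (y + 3*v + 10*0) + 3 by ring]
      omega
  | succ w ih =>
    have h10 : mu (y + 3*v + 10*w + 10) = mu (y + 3*v + 10*w) + 1 := by unfold mu; omega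
    rw [show y + 3*v + 10*(w+1) = (y + 3*v + 10*w) + 10 by ring]
    omega

lemma mu_mono2 (s t : ℕ) (h : s ≤ t) : mu s ≤ mu t + 2*(t - s) := by
  obtain ⟨k, r, hr, rfl⟩ : ∃ k r, r < 10 ∧ s = 10*k + r := ⟨s/10, s%10, by omega, by omega⟩
  obtain ⟨k', r', hr', rfl⟩ : ∃ k r, r < 10 ∧ t = 10*k + r := ⟨t/10, t%10, by omega, by omega⟩
  rw [mu_eq k r hr, mu_eq k' r' hr']
  interval_cases r <;> interval_cases r' <;> omega

lemma mu_le_self (t : ℕ) : mu t ≤ t := by unfold mu; omega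

lemma getD_eval (r : ℕ) (h : r < 10) :
    ([(-1 : ℤ), 0, 1, 0, 1, 2, 1, 2, 3, 2].getD r 0) = ((r/3 + r%3 : ℕ) : ℤ) - 1 := by
  interval_cases r <;> decide

/-- For `A = (a, (u+1)a + d, (3u+1)a + 3d, (10u+1)a + 10d)` with `d ≥ 1`,
`gcd(a,d) = 1`, `u ≥ 2`, `a ≥ 2`, and `p` a positive divisor of `a`, `p ≠ a`:
`F(⟨A⟩/p) = (a/p)·(⌊(a−p)/10⌋ + u·a + d + φ₁((a−p) mod 10)) − (u·a + d)`,
where `(φ₁(0),…,φ₁(9)) = (−1,0,1,0,1,2,1,2,3,2)`. -/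
theorem stmt_10 (a u d p : ℕ)
    (ha : 2 ≤ a) (hd : 1 ≤ d) (hu : 2 ≤ u)
    (hgcd : Nat.gcd a d = 1)
    (hp : 0 < p) (hpa : p ∣ a) (hpne : p ≠ a) :
    IsGreatest {z : ℤ | ¬ ∃ n : ℕ, (n : ℤ) = z ∧ ∃ x y v w : ℕ,
        p * n = x * a + y * ((u + 1) * a + d) + v * ((3 * u + 1) * a + 3 * d) +
          w * ((10 * u + 1) * a + 10 * d)}
      (((a / p : ℕ) : ℤ) * ((((a - p) / 10 : ℕ) : ℤ) + u * a + d +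
          [(-1 : ℤ), 0, 1, 0, 1, 2, 1, 2, 3, 2].getD ((a - p) % 10) 0)
        - ((u : ℤ) * a + d)) := by
  obtain ⟨q, haq⟩ := hpa
  have hq0 : q ≠ 0 := by rintro rfl; omega
  have hq1 : q ≠ 1 := by rintro rfl; exact hpne (by omega)
  have hq2 : 2 ≤ q := by omega
  have hpa' : p ≤ a := Nat.le_of_dvd (by omega) ⟨q, haq⟩
  have hplt : p < a := lt_of_le_of_ne hpa' hpne
  have hqd : Nat.Coprime q d :=
    Nat.Coprime.coprime_dvd_left ⟨p, by rw [haq]; ring⟩ hgcd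
  have hpd : Nat.Coprime p d :=
    Nat.Coprime.coprime_dvd_left ⟨q, haq⟩ hgcd
  have hpq1 : p * (q - 1) = a - p := by
    have h1 : p * ((q-1) + 1) = p * (q-1) + p := Nat.mul_succ p (q-1)
    rw [show (q-1)+1 = q from by omega] at h1
    omega
  -- characterization of representability
  have hrep : ∀ n : ℕ, (∃ x y v w : ℕ,
      p * n = x * a + y * ((u + 1) * a + d) + v * ((3 * u + 1) * a + 3 * d) +
        w * ((10 * u + 1) * a + 10 * d)) ↔
      ∃ τ α : ℕ, n = α * q + τ * d ∧ u * (p * τ) + mu (p * τ) ≤ α := by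
    intro n
    constructor
    · rintro ⟨x, y, v, w, h⟩
      have key : p * n = (x + (y+v+w) + u*(y+3*v+10*w)) * a + (y+3*v+10*w) * d := by
        rw [h]; ring
      set t := y + 3*v + 10*w with ht
      set C := x + (y+v+w) + u*t with hC
      have hdvdCa : p ∣ C * a := Dvd.dvd.mul_left ⟨q, haq⟩ C
      have hdvdtd : p ∣ t * d := by
        have h1 : p ∣ C * a + t * d := key ▸ Dvd.intro n rfl
        exact (Nat.dvd_add_right hdvdCa).mp h1
      obtain ⟨τ, hτ⟩ := hpd.dvd_of_dvd_mul_right hdvdtd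
      refine ⟨τ, C, ?_, ?_⟩
      · apply Nat.eq_of_mul_eq_mul_left hp
        calc p * n = C * a + t * d := key
          _ = C * (p*q) + (p*τ) * d := by rw [← haq, ← hτ]
          _ = p * (C * q + τ * d) := by ring
      · have := mu_spec2 y v w
        rw [← ht, hτ] at this
        have htt : u * (p*τ) = u * t := by rw [hτ]
        omega
    · rintro ⟨τ, α, rfl, hα⟩
      obtain ⟨y, v, w, hyvw, hsum⟩ := mu_spec1 (p*τ)
      obtain ⟨x, rfl⟩ : ∃ x, α = x + u*(p*τ) + (y+v+w) := ⟨α - u*(p*τ) - (y+v+w), by omega⟩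
      refine ⟨x, y, v, w, ?_⟩
      rw [show p * ((x + u*(p*τ) + (y+v+w)) * q + τ * d)
            = (x + u*(p*τ) + (y+v+w)) * (p*q) + (p*τ) * d from by ring, ← haq, ← hyvw]
      ring
  set r := (a - p) % 10 with hrdef
  have hr : r < 10 := Nat.mod_lt _ (by norm_num)
  set U := u * (a - p) + mu (a - p) with hU
  have hU1 : 1 ≤ U := by
    have : 0 < u * (a - p) := Nat.mul_pos (by omega) (by omega)
    omega
  set N := (U - 1) * q + (q - 1) * d with hN
  have hmu : mu (a - p) = (a-p)/10 + (r/3 + r%3) := by rw [hrdef]; unfold mu; omega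
  have hAZ : (a : ℤ) = p * q := by exact_mod_cast haq
  have hNG : ((N : ℕ) : ℤ) = (((a / p : ℕ) : ℤ) * ((((a - p) / 10 : ℕ) : ℤ) + u * a + d +
          [(-1 : ℤ), 0, 1, 0, 1, 2, 1, 2, 3, 2].getD ((a - p) % 10) 0)
        - ((u : ℤ) * a + d)) := by
    have hqp : a / p = q := by rw [haq]; exact Nat.mul_div_cancel_left q hp
    rw [hqp, ← hrdef, getD_eval r hr, hN, hU, hmu]
    push_cast [Nat.cast_sub hpa', Nat.cast_sub hU1, Nat.cast_sub (show 1 ≤ q by omega),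
      Nat.cast_sub (show (1:ℕ) ≤ u * (a-p) + ((a-p)/10 + (r/3 + r%3)) by rw [hU, hmu] at hU1; omega)]
    linear_combination (u : ℤ) * hAZ
  rw [← hNG]
  constructor
  · -- membership: N is not representable
    rw [Set.mem_setOf_eq]
    rintro ⟨n, hn, hr'⟩
    have hnN : n = N := by exact_mod_cast hn
    subst hnN
    rw [hrep] at hr'
    obtain ⟨τ, α, hna, hα⟩ := hr'
    -- congruence: τ ≡ q-1 mod q
    have hm : τ * d ≡ (q-1) * d [MOD q] := by
      have h2 : (τ*d + α*q) % q = ((q-1)*d + (U-1)*q) % q := by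
        rw [show τ*d + α*q = (q-1)*d + (U-1)*q from by omega]
      simpa [Nat.ModEq, Nat.add_mul_mod_self_right] using h2
    have hmod : τ ≡ q - 1 [MOD q] :=
      Nat.ModEq.cancel_right_of_coprime hqd hm
    have hτq : τ % q = q - 1 := by
      have h := hmod
      rwa [Nat.ModEq, Nat.mod_eq_of_lt (show q - 1 < q by omega)] at h
    have hdm := Nat.div_add_mod τ q
    obtain ⟨k, hk⟩ : ∃ k, τ = q * k + (q - 1) := ⟨τ / q, by omega⟩
    -- cancel q in the equation to get α + k*d = U - 1
    have e2 : α + k*d = U - 1 := by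
      apply Nat.eq_of_mul_eq_mul_left (show 0 < q by omega)
      have e1 : α*q + ((q*k)*d + (q-1)*d) = (U-1)*q + (q-1)*d := by
        have : τ * d = (q*k)*d + (q-1)*d := by rw [hk]; ring
        omega
      calc q*(α + k*d) = α*q + (q*k)*d := by ring
        _ = (U-1)*q := by omega
        _ = q*(U-1) := by ring
    have hpτ : p * τ = a * k + (a - p) := by
      rw [hk, Nat.mul_add, ← mul_assoc, ← haq, hpq1]
    rw [hpτ] at hα
    have hmuself := mu_le_self (a - p)
    rcases Nat.eq_zero_or_pos k with hk0 | hk1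
    · subst hk0
      simp only [Nat.mul_zero, Nat.zero_add] at hα
      omega
    · have h6 : 2 * a ≤ u * (a * k) := by
        calc 2 * a = 2 * (a * 1) := by ring
          _ ≤ u * (a * k) := Nat.mul_le_mul hu (Nat.mul_le_mul_left a hk1)
      have h7 : u * (a*k + (a-p)) = u*(a*k) + u*(a-p) := Nat.mul_add u _ _
      have h8 : mu (a*k + (a-p)) ≥ 0 := Nat.zero_le _
      have h9 : 1 ≤ k * d := Nat.one_le_iff_ne_zero.mpr (by positivity)
      omega
  · -- upper bound
    rintro z hz
    by_contra hlt
    push_neg at hlt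
    apply hz
    have hN0 : (0:ℤ) ≤ (N:ℤ) := by positivity
    set n := z.toNat with hn
    have hzn : (n : ℤ) = z := Int.toNat_of_nonneg (by omega)
    have hNn : N < n := by
      have : (N:ℤ) < (n:ℤ) := by omega
      exact_mod_cast this
    refine ⟨n, hzn, ?_⟩
    rw [hrep]
    -- find τ₀ < q with τ₀*d ≡ n mod q
    obtain ⟨e, -, he⟩ := Nat.exists_mul_mod_eq_one_of_coprime (Nat.coprime_comm.mp hqd) (by omega)
    set τ₀ := (n * e) % q with hτ₀
    have hτ₀q : τ₀ < q := Nat.mod_lt _ (by omega)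
    have hde : d * e ≡ 1 [MOD q] := by
      rw [Nat.ModEq, he, Nat.mod_eq_of_lt (by omega)]
    have hc : τ₀ * d ≡ n [MOD q] := by
      calc τ₀ * d ≡ (n * e) * d [MOD q] := (Nat.mod_modEq (n*e) q).mul_right d
        _ = n * (d * e) := by ring
        _ ≡ n * 1 [MOD q] := hde.mul_left n
        _ = n := by ring
    -- B τ₀ ≤ U*q + (q-1)*d = N + q
    have hple : p * τ₀ ≤ a - p := by
      rw [← hpq1]; exact Nat.mul_le_mul_left p (by omega)
    have hUb : u * (p * τ₀) + mu (p * τ₀) ≤ U := by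
      have h1 := mu_mono2 (p*τ₀) (a-p) hple
      have h2 : 2 * ((a-p) - p*τ₀) ≤ u * ((a-p) - p*τ₀) := Nat.mul_le_mul_right _ hu
      have h3 : u * (p*τ₀) + u * ((a-p) - p*τ₀) = u * (a-p) := by
        rw [← Nat.mul_add, Nat.add_sub_cancel' hple]
      omega
    have hBN : (u * (p * τ₀) + mu (p * τ₀)) * q + τ₀ * d ≤ U * q + (q-1) * d :=
      Nat.add_le_add (Nat.mul_le_mul_right q hUb) (Nat.mul_le_mul_right d (by omega))
    have hNq : U * q + (q-1) * d = N + q := by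
      have hUq : U * q = (U-1) * q + q := by
        calc U * q = ((U-1)+1) * q := by rw [Nat.sub_add_cancel hU1]
          _ = (U-1) * q + q := by ring
      rw [hN]; omega
    -- n ≡ B τ₀ mod q and n > B τ₀ - q implies n ≥ B τ₀
    set B := (u * (p * τ₀) + mu (p * τ₀)) * q + τ₀ * d with hB
    have hBc : B ≡ τ₀ * d [MOD q] := by
      rw [hB, Nat.ModEq, Nat.add_comm, Nat.add_mul_mod_self_right]
    have hnB : B ≤ n := by
      by_contra hcon
      push_neg at hcon
      have hmod2 : n ≡ B [MOD q] := (hc.symm.trans hBc.symm)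
      have hdvd : q ∣ B - n := (Nat.modEq_iff_dvd' (by omega)).mp hmod2
      have : q ≤ B - n := Nat.le_of_dvd (by omega) hdvd
      omega
    have htdn : τ₀ * d ≤ n := by
      have : τ₀ * d ≤ B := by rw [hB]; omega
      omega
    have hdvd2 : q ∣ n - τ₀ * d := (Nat.modEq_iff_dvd' htdn).mp hc
    obtain ⟨α, hα⟩ := hdvd2
    have hn2 : n = α * q + τ₀ * d := by rw [mul_comm α q]; omega
    refine ⟨τ₀, α, hn2, ?_⟩
    have hle : (u * (p * τ₀) + mu (p * τ₀)) * q ≤ α * q := by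
      rw [hn2, hB] at hnB
      omega
    exact Nat.le_of_mul_le_mul_right hle (by omega)
end

section
/- Let A = (a, (u+1)*a + d, (4u+1)*a + 4d, (17u+1)*a + 17d), where d is a positive integer, gcd(a, d) = 1, u ≥ 3, and a ≥ 2. Let p be a positive divisor of a with p ≠ a. Then the Frobenius number of the quotient is F(⟨A⟩/p) = (a/p) * (⌊(a−p)/17⌋ + u*a + d + φ_2((a−p) mod 17)) − (u*a + d), where φ_2(0), φ_2(1), ..., φ_2(16) equal −1, 0, 1, 2, 0, 1, 2, 3, 1, 2, 3, 4, 2, 3, 4, 5, 3 respectively. -/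
set_option maxHeartbeats 1000000


def cmin (N : ℕ) : ℕ := N / 17 + N % 17 / 4 + N % 17 % 4

lemma cmin_eq (Q R : ℕ) (h : R < 17) : cmin (17*Q + R) = Q + R/4 + R%4 := by
  unfold cmin
  rw [show 17*Q + R = R + 17*Q by ring, Nat.add_mul_mod_self_left,
    Nat.add_mul_div_left _ _ (by norm_num : (0:ℕ) < 17), Nat.mod_eq_of_lt h]
  omega

lemma cmin_rep (N : ℕ) : ∃ y v w, y + 4*v + 17*w = N ∧ y + v + w = cmin N :=
  ⟨N % 17 % 4, N % 17 / 4, N / 17, by omega, by unfold cmin; omega⟩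

lemma cmin_add1 (N : ℕ) : cmin (N+1) ≤ cmin N + 1 := by
  obtain ⟨Q, R, hR, rfl⟩ : ∃ Q R, R < 17 ∧ N = 17*Q + R := ⟨N/17, N%17, by omega, by omega⟩
  by_cases h : R = 16
  · subst h
    rw [show 17*Q+16+1 = 17*(Q+1)+0 by ring, cmin_eq _ _ (by omega), cmin_eq _ _ (by omega)]
    omega
  · rw [show 17*Q+R+1 = 17*Q+(R+1) by ring, cmin_eq _ _ (by omega), cmin_eq _ _ (by omega)]
    omega

lemma cmin_add4 (N : ℕ) : cmin (N+4) ≤ cmin N + 1 := by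
  obtain ⟨Q, R, hR, rfl⟩ : ∃ Q R, R < 17 ∧ N = 17*Q + R := ⟨N/17, N%17, by omega, by omega⟩
  by_cases h : R < 13
  · rw [show 17*Q+R+4 = 17*Q+(R+4) by ring, cmin_eq _ _ (by omega), cmin_eq _ _ hR]
    omega
  · rw [show 17*Q+R+4 = 17*(Q+1)+(R-13) by omega, cmin_eq _ _ (by omega), cmin_eq _ _ hR]
    omega

lemma cmin_add17 (N : ℕ) : cmin (N+17) ≤ cmin N + 1 := by
  obtain ⟨Q, R, hR, rfl⟩ : ∃ Q R, R < 17 ∧ N = 17*Q + R := ⟨N/17, N%17, by omega, by omega⟩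
  rw [show 17*Q+R+17 = 17*(Q+1)+R by ring, cmin_eq _ _ hR, cmin_eq _ _ hR]
  omega

lemma cmin_min (y v w : ℕ) : cmin (y + 4*v + 17*w) ≤ y + v + w := by
  induction w with
  | zero =>
    induction v with
    | zero =>
      induction y with
      | zero => simp [cmin]
      | succ y ihy =>
        have h := cmin_add1 (y + 4*0 + 17*0)
        rw [show y + 4*0 + 17*0 + 1 = y + 1 + 4*0 + 17*0 by ring] at h
        omega
    | succ v ihv =>
      have h := cmin_add4 (y + 4*v + 17*0)
      rw [show y + 4*v + 17*0 + 4 = y + 4*(v+1) + 17*0 by ring] at h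
      omega
  | succ w ihw =>
    have h := cmin_add17 (y + 4*v + 17*w)
    rw [show y + 4*v + 17*w + 17 = y + 4*v + 17*(w+1) by ring] at h
    omega

lemma cmin_succ (N : ℕ) : cmin N ≤ cmin (N+1) + 3 := by
  obtain ⟨Q, R, hR, rfl⟩ : ∃ Q R, R < 17 ∧ N = 17*Q + R := ⟨N/17, N%17, by omega, by omega⟩
  by_cases h : R = 16
  · subst h
    rw [show 17*Q+16+1 = 17*(Q+1)+0 by ring, cmin_eq (Q+1) 0 (by omega), cmin_eq Q 16 (by omega)]
  · rw [show 17*Q+R+1 = 17*Q+(R+1) by ring, cmin_eq Q (R+1) (by omega), cmin_eq Q R hR]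
    omega

lemma cmin_add_le (N k : ℕ) : cmin N ≤ cmin (N + k) + 3 * k := by
  induction k with
  | zero => simp
  | succ k ih =>
    have h2 : cmin (N+k) ≤ cmin (N+(k+1)) + 3 := cmin_succ (N+k)
    omega

lemma cmin_le (N : ℕ) : cmin N ≤ N := by unfold cmin; omega

lemma cmin_pos (N : ℕ) (h : 1 ≤ N) : 1 ≤ cmin N := by unfold cmin; omega

lemma getD_eq (r : ℕ) (hr : r < 17) :
    ([(-1 : ℤ), 0, 1, 2, 0, 1, 2, 3, 1, 2, 3, 4, 2, 3, 4, 5, 3].getD r 0)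
      = ((r / 4 + r % 4 : ℕ) : ℤ) - 1 := by
  interval_cases r <;> rfl

lemma rep_of (a u d p q n m : ℕ) (hq : p * q = a) (hp : 0 < p)
    (hmd : m * d % q = n % q)
    (hge : m * (u*a + d) + cmin (p*m) * q ≤ n) :
    ∃ x y v w : ℕ, p * n = x * a + y * ((u + 1) * a + d) + v * ((4 * u + 1) * a + 4 * d) +
          w * ((17 * u + 1) * a + 17 * d) := by
  obtain ⟨y, v, w, hN, hc⟩ := cmin_rep (p*m)
  set T : ℕ := (u*(p*m) + (y+v+w))*a + p*m*d with hT
  have hTle : T ≤ p * n := by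
    have h1 : T = p * (m * (u*a+d) + cmin (p*m) * q) := by rw [hT, ← hc, ← hq]; ring
    rw [h1]
    exact Nat.mul_le_mul_left p hge
  have hmod : (p * m * d) % a = (p * n) % a := by
    rw [← hq, Nat.mul_assoc, Nat.mul_mod_mul_left, Nat.mul_mod_mul_left, hmd]
  have hle : p * m * d ≤ p * n := le_trans (Nat.le_add_left _ _) hTle
  have hdvd1 : a ∣ p * n - p * m * d := (Nat.modEq_iff_dvd' hle).mp hmod
  have hdvd : a ∣ p * n - T := by
    have h2 : p * n - T = (p * n - p * m * d) - (u*(p*m) + (y+v+w))*a := by omega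
    rw [h2]
    exact Nat.dvd_sub hdvd1 ⟨u * (p * m) + (y + v + w), by ring⟩
  obtain ⟨x, hx⟩ := hdvd
  refine ⟨x, y, v, w, ?_⟩
  have hpn : p * n = a * x + T := by omega
  rw [hpn, hT, ← hN]
  ring

lemma not_rep (a u d p q : ℕ) (ha : 2 ≤ a) (hd : 1 ≤ d) (hu : 3 ≤ u)
    (hgcd : Nat.gcd a d = 1) (hp : 0 < p) (hq : p * q = a) (hq2 : 2 ≤ q)
    (n x y v w : ℕ)
    (hn : n = (q-1)*(u*a+d) + (cmin (a-p) - 1)*q)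
    (heq : p * n = x * a + y * ((u + 1) * a + d) + v * ((4 * u + 1) * a + 4 * d) +
          w * ((17 * u + 1) * a + 17 * d)) : False := by
  have hap : p < a := by
    have h := Nat.mul_le_mul_left p hq2
    rw [hq] at h; omega
  obtain ⟨c0, hc0⟩ : ∃ c0, cmin (a-p) = c0 := ⟨_, rfl⟩
  have hc1 : 1 ≤ c0 := hc0 ▸ cmin_pos _ (by omega)
  have hcle : c0 ≤ a - p := hc0 ▸ cmin_le _
  obtain ⟨N, hNdef⟩ : ∃ N, y + 4*v + 17*w = N := ⟨_, rfl⟩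
  obtain ⟨M, hMdef⟩ : ∃ M, x + u*N + (y+v+w) = M := ⟨_, rfl⟩
  have hMN : p * n = M * a + N * d := by rw [heq, ← hMdef, ← hNdef]; ring
  have hqz : (p:ℤ) * q = a := by exact_mod_cast hq
  have hpz : (p:ℤ) < a := by exact_mod_cast hap
  have haz : (2:ℤ) ≤ a := by exact_mod_cast ha
  have hdz : (1:ℤ) ≤ d := by exact_mod_cast hd
  have huz : (3:ℤ) ≤ u := by exact_mod_cast hu
  have hN0 : (0:ℤ) ≤ N := Int.natCast_nonneg N
  have hpn : (p:ℤ) * n = ((a:ℤ) - p)*(u*a+d) + ((c0:ℤ)-1)*a := by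
    have hn' : (n:ℤ) = ((q:ℤ)-1)*((u:ℤ)*a+d) + ((c0:ℤ)-1)*q := by
      rw [hn, hc0]; push_cast [Nat.cast_sub (by omega : 1 ≤ q), Nat.cast_sub hc1]; ring
    calc (p:ℤ) * n = (p:ℤ) * (((q:ℤ)-1)*((u:ℤ)*a+d) + ((c0:ℤ)-1)*q) := by rw [hn']
    _ = ((a:ℤ) - p)*(u*a+d) + ((c0:ℤ)-1)*a := by linear_combination ((u:ℤ)*a + d + ((c0:ℤ)-1)) * hqz
  have hMNz : (p:ℤ) * n = (M:ℤ) * a + N * d := by exact_mod_cast hMN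
  have hdvd : (a:ℤ) ∣ ((N:ℤ) - ((a:ℤ) - p)) * d := by
    refine ⟨(a:ℤ)*u - (p:ℤ)*u + c0 - 1 - M, ?_⟩
    linear_combination hpn - hMNz
  have hcop : IsCoprime (a:ℤ) (d:ℤ) := by
    rw [Int.isCoprime_iff_gcd_eq_one, Int.gcd_natCast_natCast]; exact hgcd
  obtain ⟨t, ht⟩ := hcop.dvd_of_dvd_mul_right hdvd
  have ht0 : 0 ≤ t := by
    by_contra hcon
    push_neg at hcon
    have h9 : t ≤ -1 := by omega
    have h10 : (a:ℤ)*t ≤ (a:ℤ)*(-1) := mul_le_mul_of_nonneg_left h9 (by linarith)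
    linarith
  rcases eq_or_lt_of_le ht0 with ht1 | ht1
  · -- t = 0 : N = a - p
    have hNval : (N:ℤ) = (a:ℤ) - p := by rw [← ht1, mul_zero] at ht; linarith
    have hNnat : N = a - p := by omega
    have hM : (M:ℤ) * a = (((a:ℤ)-p)*u + c0 - 1) * a := by
      linear_combination hpn - hMNz - (d:ℤ) * hNval
    have hMval : (M:ℤ) = ((a:ℤ)-p)*u + c0 - 1 :=
      mul_right_cancel₀ (by positivity : (a:ℤ) ≠ 0) hM
    have hcmin : c0 ≤ y + v + w := by
      have h5 := cmin_min y v w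
      rw [hNdef, hNnat, hc0] at h5
      omega
    have hMge : ((a:ℤ)-p)*u + c0 ≤ (M:ℤ) := by
      have h6 : (M:ℤ) = (x:ℤ) + u*N + ((y:ℤ)+v+w) := by rw [← hMdef]; push_cast; ring
      have hx : (0:ℤ) ≤ x := Int.natCast_nonneg x
      have hyvw : (c0:ℤ) ≤ (y:ℤ)+v+w := by exact_mod_cast hcmin
      rw [h6, hNval]; linarith
    linarith
  · -- t ≥ 1 : N ≥ 2a - p
    have hNge : (2*(a:ℤ) - p) ≤ N := by
      have h10 : (a:ℤ)*1 ≤ (a:ℤ)*t := mul_le_mul_of_nonneg_left (by omega) (by linarith)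
      linarith
    have hMge : (u:ℤ)*N ≤ M := by
      have h7 : u*N ≤ M := by omega
      exact_mod_cast h7
    have haz0 : (0:ℤ) ≤ a := by linarith
    have h1' : ((u:ℤ)*N)*a ≤ (M:ℤ)*a := mul_le_mul_of_nonneg_right hMge haz0
    have h1 : (N:ℤ)*(u*a+d) ≤ (M:ℤ)*a + N*d := by linarith [h1']
    have hud : (0:ℤ) ≤ (u:ℤ)*a+d := by positivity
    have h2 : (2*(a:ℤ)-p)*(u*a+d) ≤ (N:ℤ)*(u*a+d) := mul_le_mul_of_nonneg_right hNge hud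
    have hc0z : (c0:ℤ) ≤ (a:ℤ) - p := by
      have h8 : (c0:ℤ) ≤ ((a-p : ℕ):ℤ) := by exact_mod_cast hcle
      have h8' : ((a-p:ℕ):ℤ) = (a:ℤ) - p := by push_cast [Nat.cast_sub hap.le]; ring
      linarith
    have h3 : ((u:ℤ)*a+d)*a ≤ ((c0:ℤ)-1)*a := by linarith
    have h4 : (u:ℤ)*a+d ≤ (c0:ℤ)-1 := le_of_mul_le_mul_right h3 (by linarith)
    have h5 : (3:ℤ)*a ≤ (u:ℤ)*a := mul_le_mul_of_nonneg_right huz haz0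
    linarith

/-- For `A = (a, (u+1)a + d, (4u+1)a + 4d, (17u+1)a + 17d)` with `d ≥ 1`,
`gcd(a,d) = 1`, `u ≥ 3`, `a ≥ 2`, and `p` a positive divisor of `a`, `p ≠ a`:
`F(⟨A⟩/p) = (a/p)·(⌊(a−p)/17⌋ + u·a + d + φ₂((a−p) mod 17)) − (u·a + d)`,
where `(φ₂(0),…,φ₂(16)) = (−1,0,1,2,0,1,2,3,1,2,3,4,2,3,4,5,3)`. -/
theorem stmt_11 (a u d p : ℕ)
    (ha : 2 ≤ a) (hd : 1 ≤ d) (hu : 3 ≤ u)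
    (hgcd : Nat.gcd a d = 1)
    (hp : 0 < p) (hpa : p ∣ a) (hpne : p ≠ a) :
    IsGreatest {z : ℤ | ¬ ∃ n : ℕ, (n : ℤ) = z ∧ ∃ x y v w : ℕ,
        p * n = x * a + y * ((u + 1) * a + d) + v * ((4 * u + 1) * a + 4 * d) +
          w * ((17 * u + 1) * a + 17 * d)}
      (((a / p : ℕ) : ℤ) * ((((a - p) / 17 : ℕ) : ℤ) + u * a + d +
          [(-1 : ℤ), 0, 1, 2, 0, 1, 2, 3, 1, 2, 3, 4, 2, 3, 4, 5, 3].getD ((a - p) % 17) 0)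
        - ((u : ℤ) * a + d)) := by
  obtain ⟨q, hqdef⟩ : ∃ q, a / p = q := ⟨_, rfl⟩
  have hq : p * q = a := by rw [← hqdef]; exact Nat.mul_div_cancel' hpa
  have hq0 : q ≠ 0 := by rintro rfl; omega
  have hq1 : q ≠ 1 := by rintro rfl; rw [Nat.mul_one] at hq; exact hpne hq
  have hq2 : 2 ≤ q := by omega
  have hap : p < a := by
    have h := Nat.mul_le_mul_left p hq2
    rw [hq] at h; omega
  obtain ⟨c0, hc0⟩ : ∃ c0, cmin (a-p) = c0 := ⟨_, rfl⟩
  have hc1 : 1 ≤ c0 := hc0 ▸ cmin_pos _ (by omega)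
  have hcle : c0 ≤ a - p := hc0 ▸ cmin_le _
  obtain ⟨F, hF⟩ : ∃ F, (q-1)*(u*a+d) + (c0 - 1)*q = F := ⟨_, rfl⟩
  -- identify the target value with (F : ℤ)
  have hr : (a-p) % 17 < 17 := Nat.mod_lt _ (by norm_num)
  have hval : ((a / p : ℕ) : ℤ) * ((((a - p) / 17 : ℕ) : ℤ) + u * a + d +
          [(-1 : ℤ), 0, 1, 2, 0, 1, 2, 3, 1, 2, 3, 4, 2, 3, 4, 5, 3].getD ((a - p) % 17) 0)
        - ((u : ℤ) * a + d) = (F : ℤ) := by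
    rw [hqdef, getD_eq _ hr]
    have hcz : (c0:ℤ) = (((a-p)/17:ℕ):ℤ) + (((a-p)%17/4 + (a-p)%17%4 : ℕ):ℤ) := by
      rw [← hc0]; unfold cmin; push_cast; ring
    have hFz : (F:ℤ) = ((q:ℤ)-1)*((u:ℤ)*a+d) + ((c0:ℤ)-1)*q := by
      rw [← hF]; push_cast [Nat.cast_sub (by omega : 1 ≤ q), Nat.cast_sub hc1]; ring
    rw [hFz]
    linear_combination (-(q:ℤ)) * hcz
  rw [hval]
  constructor
  · -- membership
    rintro ⟨n, hnz, x, y, v, w, heq⟩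
    have hn : n = F := by exact_mod_cast hnz
    exact not_rep a u d p q ha hd hu hgcd hp hq hq2 n x y v w (by rw [hn, ← hF, hc0]) heq
  · -- upper bound
    rintro z hz
    by_contra hcon
    push_neg at hcon
    have hz0 : 0 < z := lt_of_le_of_lt (Int.natCast_nonneg F) hcon
    obtain ⟨n, rfl⟩ : ∃ n : ℕ, (n:ℤ) = z := ⟨z.toNat, Int.toNat_of_nonneg hz0.le⟩
    have hnF : F + 1 ≤ n := by exact_mod_cast hcon
    -- find m
    have hdq : Nat.Coprime d q := Nat.Coprime.coprime_dvd_right ⟨p, by rw [← hq]; ring⟩ (Nat.coprime_comm.mp hgcd)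
    obtain ⟨e, -, he⟩ := Nat.exists_mul_mod_eq_one_of_coprime hdq (by omega)
    obtain ⟨m, hmdef⟩ : ∃ m, (e * n) % q = m := ⟨_, rfl⟩
    have hm : m < q := hmdef ▸ Nat.mod_lt _ (by omega)
    have hmd : m * d % q = n % q := by
      have h1 : m * d ≡ e * n * d [MOD q] := by
        rw [← hmdef]; exact (Nat.mod_modEq (e*n) q).mul_right d
      have h2 : e * n * d = n * (d * e) := by ring
      have h3 : n * (d * e) ≡ n * 1 [MOD q] := Nat.ModEq.mul_left n (by
        unfold Nat.ModEq; rw [he, Nat.mod_eq_of_lt (by omega)])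
      have := (h1.trans (h2 ▸ h3)).trans (by rw [Nat.mul_one] : n * 1 ≡ n [MOD q])
      exact this
    -- bound : B(m) ≤ F + q
    obtain ⟨k, hk⟩ : ∃ k, q - 1 - m = k := ⟨_, rfl⟩
    have hsum : p*m + p*k = a - p := by
      have h1 : p*m + p*k = p*(q-1) := by rw [← Nat.mul_add]; congr 1; omega
      have h2 : p*(q-1) + p = p*q := by rw [← Nat.mul_succ]; congr 1; omega
      omega
    have c1 : cmin (p*m) ≤ c0 + 3*(p*k) := by
      have h4 := cmin_add_le (p*m) (p*k)
      rw [hsum, hc0] at h4; omega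
    have c2 : cmin (p*m)*q ≤ (c0 + 3*(p*k))*q := Nat.mul_le_mul_right q c1
    have c3 : (c0 + 3*(p*k))*q = c0*q + 3*k*a := by rw [← hq]; ring
    have c4 : 3*k*a ≤ k*(u*a+d) := by
      have h5 : 3*a ≤ u*a := Nat.mul_le_mul_right a hu
      calc 3*k*a = k*(3*a) := by ring
      _ ≤ k*(u*a+d) := Nat.mul_le_mul_left k (by omega)
    have c5 : (q-1)*(u*a+d) = m*(u*a+d) + k*(u*a+d) := by
      rw [show q - 1 = m + k by omega]; ring
    have c6 : (c0-1)*q + q = c0*q := by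
      rw [Nat.sub_mul, Nat.one_mul]
      have : q ≤ c0*q := by calc q = 1*q := by ring
                                 _ ≤ c0*q := Nat.mul_le_mul_right q hc1
      omega
    have hBle : m*(u*a+d) + cmin (p*m)*q ≤ F + q := by omega
    -- congruence : B(m) ≡ n  mod q
    have hBmod : (m*(u*a+d) + cmin (p*m)*q) % q = n % q := by
      have h6 : m*(u*a+d) + cmin (p*m)*q = m*d + (m*u*p + cmin (p*m))*q := by
        rw [← hq]; ring
      rw [h6, Nat.add_mul_mod_self_right, hmd]
    have hge : m*(u*a+d) + cmin (p*m)*q ≤ n := by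
      by_contra h7
      push_neg at h7
      have h8 : n ≤ m*(u*a+d) + cmin (p*m)*q := h7.le
      have h9 : q ∣ (m*(u*a+d) + cmin (p*m)*q) - n :=
        (Nat.modEq_iff_dvd' h8).mp hBmod.symm
      have h10 := Nat.le_of_dvd (by omega) h9
      omega
    exact hz ⟨n, rfl, rep_of a u d p q n m hq hp hmd hge⟩
end

section
/- Let A = (a, (u+1)*a + d, (3u+1)*a + 3d, (7u+1)*a + 7d, (29u+1)*a + 29d), where d is a positive integer, gcd(a, d) = 1, u ≥ 3, and a ≥ 2. Let p be a positive divisor of a with p ≠ a. Then the Frobenius number of the quotient is F(⟨A⟩/p) = (a/p) * (⌊(a−p)/29⌋ + u*a + d + φ_3((a−p) mod 29)) − (u*a + d), where φ_3(0), φ_3(1), ..., φ_3(28) equal −1, 0, 1, 0, 1, 2, 1, 0, 1, 2, 1, 2, 3, 2, 1, 2, 3, 2, 3, 4, 3, 2, 3, 4, 3, 4, 5, 4, 3 respectively. -/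
/- Auxiliary definitions: `gg r` is the minimal number of coins from {1,3,7}
(equivalently {1,3,7,29}) summing to `r` for `r < 29`, computed greedily;
`ff m` is the minimal number of coins from {1,3,7,29} summing to `m`. -/

def gg (r : ℕ) : ℕ := r / 7 + r % 7 / 3 + r % 7 % 3
def ff (m : ℕ) : ℕ := m / 29 + gg (m % 29)

lemma gg_step7a : ∀ r < 22, gg (r+7) ≤ gg r + 1 := by decide
lemma gg_step7b : ∀ r < 29, 22 ≤ r → gg (r-22) ≤ gg r := by decide

lemma ff_le_self (m : ℕ) : ff m ≤ m := by unfold ff gg; omega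
lemma ff_pos (m : ℕ) (h : 1 ≤ m) : 1 ≤ ff m := by unfold ff gg; omega
lemma ff_drop1 (m : ℕ) : ff m ≤ ff (m+1) + 3 := by unfold ff gg; omega
lemma ff_mono6 {m n : ℕ} (h : m ≤ n) : ff m ≤ ff n + 6 := by unfold ff gg; omega
lemma ff_step1 (m : ℕ) : ff (m+1) ≤ ff m + 1 := by unfold ff gg; omega
lemma ff_step3 (m : ℕ) : ff (m+3) ≤ ff m + 1 := by unfold ff gg; omega
lemma ff_step7 (m : ℕ) : ff (m+7) ≤ ff m + 1 := by
  rcases Nat.lt_or_ge (m % 29) 22 with h | h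
  · have h1 : (m+7) / 29 = m / 29 := by omega
    have h2 : (m+7) % 29 = m % 29 + 7 := by omega
    have h3 := gg_step7a (m % 29) h
    unfold ff; rw [h1, h2]; omega
  · have h1 : (m+7) / 29 = m / 29 + 1 := by omega
    have h2 : (m+7) % 29 = m % 29 - 22 := by omega
    have h3 := gg_step7b (m % 29) (Nat.mod_lt _ (by norm_num)) h
    unfold ff; rw [h1, h2]; omega
lemma ff_step29 (m : ℕ) : ff (m+29) ≤ ff m + 1 := by unfold ff gg; omega

lemma ff_add_mul (k c m : ℕ) (hk : ∀ x, ff (x + k) ≤ ff x + 1) :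
    ff (m + k*c) ≤ ff m + c := by
  induction c with
  | zero => simp
  | succ c ih =>
    have h1 : m + k*(c+1) = m + k*c + k := by ring
    rw [h1]
    calc ff (m + k*c + k) ≤ ff (m + k*c) + 1 := hk _
      _ ≤ ff m + c + 1 := by omega

lemma ff_min (c1 c3 c7 c29 : ℕ) : ff (c1 + 3*c3 + 7*c7 + 29*c29) ≤ c1 + c3 + c7 + c29 := by
  have h29 := ff_add_mul 29 c29 (c1 + 3*c3 + 7*c7) ff_step29
  have h7 := ff_add_mul 7 c7 (c1 + 3*c3) ff_step7
  have h3 := ff_add_mul 3 c3 c1 ff_step3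
  have h1 := ff_add_mul 1 c1 0 ff_step1
  have e1 : (0:ℕ) + 1*c1 = c1 := by ring
  rw [e1] at h1
  have hff0 : ff 0 = 0 := rfl
  omega

lemma phi_eq : ∀ r < 29, ([(-1 : ℤ), 0, 1, 0, 1, 2, 1, 0, 1, 2, 1, 2, 3, 2, 1, 2, 3, 2, 3, 4, 3, 2,
            3, 4, 3, 4, 5, 4, 3].getD r 0) = (gg r : ℤ) - 1 := by decide

/-- For `A = (a, (u+1)a + d, (3u+1)a + 3d, (7u+1)a + 7d, (29u+1)a + 29d)`
with `d ≥ 1`, `gcd(a,d) = 1`, `u ≥ 3`, `a ≥ 2`, and `p` a positive divisor of `a`,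
`p ≠ a`: `F(⟨A⟩/p) = (a/p)·(⌊(a−p)/29⌋ + u·a + d + φ₃((a−p) mod 29)) − (u·a + d)`,
where `(φ₃(0),…,φ₃(28)) = (−1,0,1,0,1,2,1,0,1,2,1,2,3,2,1,2,3,2,3,4,3,2,3,4,3,4,5,4,3)`. -/
theorem stmt_12 (a u d p : ℕ)
    (ha : 2 ≤ a) (hd : 1 ≤ d) (hu : 3 ≤ u)
    (hgcd : Nat.gcd a d = 1)
    (hp : 0 < p) (hpa : p ∣ a) (hpne : p ≠ a) :
    IsGreatest {z : ℤ | ¬ ∃ n : ℕ, (n : ℤ) = z ∧ ∃ x y v w t : ℕ,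
        p * n = x * a + y * ((u + 1) * a + d) + v * ((3 * u + 1) * a + 3 * d) +
          w * ((7 * u + 1) * a + 7 * d) + t * ((29 * u + 1) * a + 29 * d)}
      (((a / p : ℕ) : ℤ) * ((((a - p) / 29 : ℕ) : ℤ) + u * a + d +
          [(-1 : ℤ), 0, 1, 0, 1, 2, 1, 0, 1, 2, 1, 2, 3, 2, 1, 2, 3, 2, 3, 4, 3, 2,
            3, 4, 3, 4, 5, 4, 3].getD ((a - p) % 29) 0)
        - ((u : ℤ) * a + d)) := by
  obtain ⟨q, hq⟩ := hpa
  have hq0 : q ≠ 0 := by rintro rfl; simp at hq; omega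
  have hq1 : q ≠ 1 := by rintro rfl; simp at hq; exact hpne hq.symm
  have hq2 : 2 ≤ q := by omega
  obtain ⟨r, hr⟩ : ∃ r, q = r + 1 := ⟨q - 1, by omega⟩
  have hr1 : 1 ≤ r := by omega
  have hpa' : p < a := by
    have h2 : p * 2 ≤ p * q := Nat.mul_le_mul_left p hq2
    have h3 : p * 2 ≤ a := by omega
    omega
  have haq : q ≤ a := by
    have h2 : 1 * q ≤ p * q := Nat.mul_le_mul_right q hp
    rw [one_mul, ← hq] at h2; exact h2
  set f₀ := ff (a - p) with hf₀def
  have hf₀1 : 1 ≤ f₀ := ff_pos _ (by omega)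
  obtain ⟨e, he⟩ : ∃ e, f₀ = e + 1 := ⟨f₀ - 1, by omega⟩
  set Fn := r * (u*a+d) + e * q with hFndef
  have hqdiv : a / p = q := by rw [hq]; exact Nat.mul_div_cancel_left q hp
  have hφ := phi_eq ((a-p) % 29) (Nat.mod_lt _ (by norm_num))
  have hff : (a-p)/29 + gg ((a-p)%29) = f₀ := rfl
  have hqZ : (q:ℤ) = r + 1 := by exact_mod_cast hr
  have hFnZ : (Fn:ℤ) = r*(u*a+d) + e*q := by rw [hFndef]; push_cast; ring
  have hffZ : (((a-p)/29 : ℕ):ℤ) + (gg ((a-p)%29) : ℤ) = (e:ℤ) + 1 := by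
    exact_mod_cast hff.trans he
  have hval : (((a / p : ℕ) : ℤ) * ((((a - p) / 29 : ℕ) : ℤ) + u * a + d +
          [(-1 : ℤ), 0, 1, 0, 1, 2, 1, 0, 1, 2, 1, 2, 3, 2, 1, 2, 3, 2, 3, 4, 3, 2,
            3, 4, 3, 4, 5, 4, 3].getD ((a - p) % 29) 0)
        - ((u : ℤ) * a + d)) = (Fn : ℤ) := by
    rw [hqdiv, hφ]
    linear_combination (q:ℤ)*hffZ - hFnZ + ((u:ℤ)*(a:ℤ)+(d:ℤ))*hqZ
  rw [hval]
  -- some shared facts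
  have hab : Nat.Coprime a (u*a+d) := by
    have h := (Nat.coprime_add_mul_right_right a d u).mpr (hgcd : Nat.Coprime a d)
    rwa [add_comm] at h
  have haZ : (a:ℤ) = p*q := by exact_mod_cast hq
  constructor
  · -- `Fn` is not representable
    rintro ⟨n, hn, x, y, v, w, t, heq⟩
    have hnFn : n = Fn := by exact_mod_cast hn
    subst hnFn
    have heqZ : (p:ℤ) * Fn = x*a + y*((u+1)*a+d) + v*((3*u+1)*a+3*d) +
        w*((7*u+1)*a+7*d) + t*((29*u+1)*a+29*d) := by exact_mod_cast heq
    have h1 : ((x:ℤ)+y+v+w+t)*a + ((y:ℤ)+3*v+7*w+29*t)*((u:ℤ)*a+d) = p*Fn := by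
      linear_combination -heqZ
    have h2 : (p:ℤ)*Fn = ((a:ℤ)-p)*((u:ℤ)*a+d) + e*a := by
      rw [hFnZ, haZ, hqZ]; ring
    have hkey : (((y:ℤ)+3*v+7*w+29*t) - ((a:ℤ) - p)) * ((u:ℤ)*a+d)
        = ((e:ℤ) - (x+y+v+w+t)) * a := by
      linear_combination h1 + h2
    have hcop : IsCoprime ((a:ℤ)) ((u:ℤ)*a+d) := by
      have h : IsCoprime ((a:ℤ)) (((u*a+d : ℕ)):ℤ) := by
        rw [Int.isCoprime_iff_gcd_eq_one, Int.gcd_natCast_natCast]; exact hab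
      push_cast at h; exact h
    have hdvd : (a:ℤ) ∣ (((y:ℤ)+3*v+7*w+29*t) - ((a:ℤ) - p)) := by
      apply hcop.dvd_of_dvd_mul_right
      exact ⟨(e:ℤ) - (x+y+v+w+t), by linear_combination hkey⟩
    obtain ⟨k, hk⟩ := hdvd
    have ha0 : (a:ℤ) ≠ 0 := by exact_mod_cast (by omega : a ≠ 0)
    have hkb : k*((u:ℤ)*a+d) = (e:ℤ) - (x+y+v+w+t) := by
      apply mul_left_cancel₀ ha0
      linear_combination hkey - ((u:ℤ)*a+d)*hk
    have hBpos : (0:ℤ) < (u:ℤ)*a+d := by positivity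
    have hfnat : f₀ < u*a+d := by
      calc f₀ ≤ a - p := hf₀def ▸ ff_le_self _
        _ ≤ a := Nat.sub_le _ _
        _ ≤ u*a := Nat.le_mul_of_pos_left a (by omega)
        _ < u*a + d := by omega
    have hfZ : (f₀:ℤ) < (u:ℤ)*a+d := by exact_mod_cast hfnat
    have heZ : (f₀:ℤ) = e + 1 := by exact_mod_cast he
    have hk0 : k = 0 := by
      rcases lt_trichotomy k 0 with h | h | h
      · exfalso
        have hY0 : (0:ℤ) ≤ ((y:ℤ)+3*v+7*w+29*t) := by positivity
        have hak : (a:ℤ)*k ≤ a*(-1) := mul_le_mul_of_nonneg_left (by omega) (by positivity)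
        have hYe : ((y:ℤ)+3*v+7*w+29*t) = ((a:ℤ)-p) + a*k := by linear_combination hk
        have hpZ : (1:ℤ) ≤ p := by exact_mod_cast hp
        have hpaZ : (p:ℤ) ≤ a := by exact_mod_cast hpa'.le
        linarith
      · exact h
      · exfalso
        have h1k : (1:ℤ) ≤ k := h
        have h2k := mul_le_mul_of_nonneg_right h1k hBpos.le
        rw [one_mul] at h2k
        have hC0 : (0:ℤ) ≤ ((x:ℤ)+y+v+w+t) := by positivity
        linarith
    rw [hk0] at hk hkb
    rw [zero_mul] at hkb
    have hYnat : y+3*v+7*w+29*t = a - p := by omega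
    have hCe : x+y+v+w+t = e := by omega
    have hmin : ff (y + 3*v + 7*w + 29*t) ≤ y + v + w + t := ff_min y v w t
    rw [hYnat, ← hf₀def] at hmin
    omega
  · -- upper bound
    rintro z hz
    by_contra hlt
    push_neg at hlt
    apply hz
    have hz0 : (0:ℤ) ≤ z := le_trans (Int.natCast_nonneg Fn) hlt.le
    have hzn : ((z.toNat : ℕ):ℤ) = z := Int.toNat_of_nonneg hz0
    obtain ⟨n, hn⟩ : ∃ n : ℕ, ((n:ℤ)) = z := ⟨z.toNat, hzn⟩
    have hFn_lt : Fn < n := by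
      rw [← hn] at hlt; exact_mod_cast hlt
    refine ⟨n, hn, ?_⟩
    haveI : NeZero q := ⟨hq0⟩
    have hqb : Nat.Coprime q (u*a+d) :=
      Nat.Coprime.coprime_dvd_left ⟨p, by rw [hq]; ring⟩ hab
    have hbu : IsUnit ((u*a+d : ℕ) : ZMod q) := by
      rw [ZMod.isUnit_iff_coprime]; exact hqb.symm
    obtain ⟨z₀, hz₀⟩ : ∃ z₀, z₀ = ((n : ZMod q) * (((u*a+d : ℕ)) : ZMod q)⁻¹).val := ⟨_, rfl⟩
    have hz₀q : z₀ < q := hz₀ ▸ ZMod.val_lt _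
    have hz₀r : z₀ ≤ r := by omega
    have hmod : z₀ * (u*a+d) ≡ n [MOD q] := by
      have h1 : ((z₀ * (u*a+d) : ℕ) : ZMod q) = ((n : ℕ) : ZMod q) := by
        rw [Nat.cast_mul]
        rw [hz₀]
        simp only [ZMod.natCast_val, ZMod.cast_id]
        rw [mul_assoc, ZMod.inv_mul_of_unit _ hbu, mul_one]
      exact (ZMod.natCast_eq_natCast_iff _ _ _).mp h1
    have hapr : a - p = p * r := by
      have h : a = p*r + p := by rw [hq, hr]; ring
      omega
    have hL3 : z₀ * (u*a+d) + ff (p*z₀) * q ≤ Fn + q := by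
      rcases eq_or_lt_of_le hz₀r with hzr | hzr
      · rw [hzr, ← hapr, ← hf₀def, hFndef, he]
        exact le_of_eq (by ring)
      · set w := r - z₀ with hwdef
        have hw1 : 1 ≤ w := by omega
        have hzw : z₀ + w = r := by omega
        have hap : a - p = p*z₀ + p*w := by rw [hapr, ← hzw]; ring
        have hmono : ff (p*z₀) ≤ f₀ + 6 := by
          rw [hf₀def]
          exact ff_mono6 (by rw [hap]; exact Nat.le_add_right _ _)
        by_cases hwp : w = 1 ∧ p = 1
        · obtain ⟨hw1', hp1⟩ := hwp
          have hstep : ff (p*z₀) ≤ f₀ + 3 := by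
            have hsucc : p*z₀ + 1 = a - p := by rw [hap, hw1', hp1]
            have h2 := ff_drop1 (p*z₀)
            rw [hsucc, ← hf₀def] at h2
            exact h2
          have h3q : 3*q ≤ u*a + d := by
            calc 3*q ≤ 3*a := Nat.mul_le_mul_left 3 haq
              _ ≤ u*a := Nat.mul_le_mul_right a hu
              _ ≤ u*a + d := Nat.le_add_right _ _
          have hzr' : z₀ + 1 = r := by omega
          calc z₀*(u*a+d) + ff (p*z₀)*q
              ≤ z₀*(u*a+d) + (f₀+3)*q := Nat.add_le_add_left (Nat.mul_le_mul_right q hstep) _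
            _ = z₀*(u*a+d) + f₀*q + 3*q := by ring
            _ ≤ z₀*(u*a+d) + f₀*q + (u*a+d) := Nat.add_le_add_left h3q _
            _ = (z₀+1)*(u*a+d) + f₀*q := by ring
            _ = r*(u*a+d) + (e+1)*q := by rw [hzr', he]
            _ = Fn + q := by rw [hFndef]; ring
        · have hwp2 : 2 ≤ w*p := by
            have h : 2 ≤ w ∨ 2 ≤ p := by omega
            rcases h with h | h
            · calc 2 = 2*1 := rfl
                _ ≤ w*p := Nat.mul_le_mul h hp
            · calc 2 = 1*2 := rfl
                _ ≤ w*p := Nat.mul_le_mul hw1 h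
          have h6q : 6*q ≤ w*(u*a+d) := by
            calc 6*q = 3*2*q := by ring
              _ ≤ 3*(w*p)*q := Nat.mul_le_mul_right q (Nat.mul_le_mul_left 3 hwp2)
              _ = w*(3*a) := by rw [hq]; ring
              _ ≤ w*(u*a+d) := Nat.mul_le_mul_left w
                  (le_trans (Nat.mul_le_mul_right a hu) (Nat.le_add_right _ _))
          calc z₀*(u*a+d) + ff (p*z₀)*q
              ≤ z₀*(u*a+d) + (f₀+6)*q := Nat.add_le_add_left (Nat.mul_le_mul_right q hmono) _
            _ = z₀*(u*a+d) + f₀*q + 6*q := by ring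
            _ ≤ z₀*(u*a+d) + f₀*q + w*(u*a+d) := Nat.add_le_add_left h6q _
            _ = (z₀+w)*(u*a+d) + f₀*q := by ring
            _ = r*(u*a+d) + (e+1)*q := by rw [hzw, he]
            _ = Fn + q := by rw [hFndef]; ring
    have hdvd0 : (q:ℤ) ∣ (n:ℤ) - z₀*((u:ℤ)*a+d) := by
      have h := hmod.dvd
      push_cast at h ⊢
      convert h using 2
    have hkey : z₀*(u*a+d) + ff (p*z₀) * q ≤ n := by
      by_contra hcon
      push_neg at hcon
      obtain ⟨c, hc⟩ := hdvd0
      have hq0' : (0:ℤ) < q := by exact_mod_cast Nat.pos_of_ne_zero hq0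
      have hconZ : (n:ℤ) < z₀*((u:ℤ)*a+d) + (ff (p*z₀):ℤ)*q := by exact_mod_cast hcon
      have hFnZ' : ((Fn:ℕ):ℤ) < (n:ℤ) := by exact_mod_cast hFn_lt
      have hL3Z : (z₀:ℤ)*((u:ℤ)*a+d) + (ff (p*z₀):ℤ)*q ≤ (Fn:ℤ) + q := by exact_mod_cast hL3
      have hcf : c ≤ (ff (p*z₀):ℤ) - 1 := by
        by_contra hcf
        push_neg at hcf
        have h1 : (ff (p*z₀):ℤ) ≤ c := by omega
        have h2 : (ff (p*z₀):ℤ)*q ≤ c*q := mul_le_mul_of_nonneg_right h1 hq0'.le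
        linarith
      have hcle : (q:ℤ)*c ≤ q*((ff (p*z₀):ℤ) - 1) := mul_le_mul_of_nonneg_left hcf hq0'.le
      linarith
    have hle : z₀*(u*a+d) ≤ n := le_trans (Nat.le_add_right _ _) hkey
    have hdvdnat : q ∣ n - z₀*(u*a+d) := (Nat.modEq_iff_dvd' hle).mp hmod
    obtain ⟨k, hk⟩ := hdvdnat
    have hkn : n = q*k + z₀*(u*a+d) := (Nat.sub_eq_iff_eq_add hle).mp hk
    have hkff : ff (p*z₀) ≤ k := by
      have h2 := hkey
      rw [hkn] at h2
      rw [add_comm (q*k)] at h2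
      have h3 : ff (p*z₀) * q ≤ q * k := le_of_add_le_add_left h2
      rw [mul_comm] at h3
      exact Nat.le_of_mul_le_mul_left h3 (Nat.pos_of_ne_zero hq0)
    obtain ⟨m, hmm⟩ : ∃ m, m = p*z₀ := ⟨_, rfl⟩
    rw [← hmm] at hkff
    refine ⟨k - ff m, m % 29 % 7 % 3, m % 29 % 7 / 3, m % 29 / 7, m / 29, ?_⟩
    have hd1 : m % 29 % 7 % 3 + 3*(m % 29 % 7 / 3) + 7*(m % 29 / 7) + 29*(m/29) = m := by omega
    have hd2 : m % 29 % 7 % 3 + m % 29 % 7 / 3 + m % 29 / 7 + m / 29 = ff m := by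
      unfold ff gg; omega
    have hsum : (k - ff m) + (m % 29 % 7 % 3 + m % 29 % 7 / 3 + m % 29 / 7 + m / 29) = k := by
      rw [hd2]; omega
    calc p * n = p * (q*k + z₀*(u*a+d)) := by rw [hkn]
      _ = k*(p*q) + (p*z₀)*(u*a+d) := by ring
      _ = k*a + m*(u*a+d) := by rw [← hq, hmm]
      _ = ((k - ff m) + (m % 29 % 7 % 3 + m % 29 % 7 / 3 + m % 29 / 7 + m / 29))*a
          + (m % 29 % 7 % 3 + 3*(m % 29 % 7 / 3) + 7*(m % 29 / 7) + 29*(m/29))*(u*a+d) := by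
        rw [hsum, hd1]
      _ = (k - ff m)*a + (m % 29 % 7 % 3)*((u+1)*a+d) + (m % 29 % 7 / 3)*((3*u+1)*a+3*d)
          + (m % 29 / 7)*((7*u+1)*a+7*d) + (m/29)*((29*u+1)*a+29*d) := by ring
end

section
/- Let ⟨A⟩ be a CNS numerical semigroup with parameters a ≥ 2, k ≥ 2, b ≥ 2, and positive integer d with gcd(a,d) = 1, and let p be a positive divisor of a with p ≠ a. Let X(a−p) = (x_1, ..., x_k) be the greedy presentation of a − p with respect to B = (1, b+1, b²+b+1, ..., (b^k−1)/(b−1)). If a ≥ k − 1 − (d−1)/(b−1), then the Frobenius number of the quotient is F(⟨A⟩/p) = (Σ_{i=1}^k x_i) * (a/p) + (a/p − 1)*((b−1)*a + d) − a/p. -/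
/-- `repunit b i = 1 + b + ⋯ + b^(i-1) = (b^i − 1)/(b − 1)`. -/
def repunit (b i : ℕ) : ℕ := ∑ j ∈ Finset.range i, b ^ j

namespace CNS

lemma repunit_zero (b : ℕ) : repunit b 0 = 0 := by simp [repunit]

lemma repunit_one (b : ℕ) : repunit b 1 = 1 := by simp [repunit]

lemma repunit_succ (b i : ℕ) : repunit b (i+1) = b * repunit b i + 1 := by
  rw [repunit, Finset.sum_range_succ']
  simp [repunit, Finset.mul_sum, pow_succ, mul_comm]

lemma one_le_repunit (b : ℕ) {i : ℕ} (hi : 1 ≤ i) : 1 ≤ repunit b i := by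
  obtain ⟨j, rfl⟩ := Nat.exists_eq_add_of_le hi
  rw [add_comm, repunit_succ]; omega

lemma repunit_lt_succ {b : ℕ} (hb : 1 ≤ b) (i : ℕ) : repunit b i < repunit b (i+1) := by
  rw [repunit_succ]
  nlinarith [Nat.zero_le (repunit b i)]

lemma repunit_mono {b : ℕ} (hb : 1 ≤ b) : StrictMono (repunit b) :=
  strictMono_nat_of_lt_succ (repunit_lt_succ hb)

lemma pow_eq_repunit {b : ℕ} (hb : 1 ≤ b) (i : ℕ) : (b-1) * repunit b i + 1 = b ^ i := by
  obtain ⟨m, rfl⟩ : ∃ m, b = m + 1 := ⟨b - 1, by omega⟩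
  induction i with
  | zero => simp [repunit_zero]
  | succ n ih =>
    rw [repunit_succ, pow_succ, ← ih]
    simp only [Nat.add_sub_cancel]
    ring

lemma two_pow_le_repunit {b : ℕ} (hb : 2 ≤ b) (i : ℕ) : 2 ^ i ≤ repunit b i + 1 := by
  have h1 : repunit 2 i ≤ repunit b i := by
    apply Finset.sum_le_sum
    intro j _
    exact Nat.pow_le_pow_left hb j
  have h2 : (2-1) * repunit 2 i + 1 = 2 ^ i := pow_eq_repunit (by norm_num) i
  omega

lemma three_le_repunit {b k : ℕ} (hb : 2 ≤ b) (hk : 2 ≤ k) : 3 ≤ repunit b k := by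
  have h2 : repunit b 2 ≤ repunit b k := (repunit_mono (by omega : 1 ≤ b)).monotone hk
  have h3 : repunit b 2 = b * 1 + 1 := by rw [repunit_succ, repunit_one]
  omega


/-- Greedy digit-sum of `T` w.r.t. repunits `r 1, …, r k` (with `G b 0 T = T`). -/
def G (b : ℕ) : ℕ → ℕ → ℕ
  | 0, T => T
  | (k+1), T => T / repunit b (k+1) + G b k (T % repunit b (k+1))

lemma G_zero (b k : ℕ) : G b k 0 = 0 := by
  induction k with
  | zero => rfl
  | succ n ih => simp [G, ih]

lemma G_one (b T : ℕ) : G b 1 T = T := by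
  simp [G, repunit_one, Nat.mod_one]

lemma G_of_lt {b k T : ℕ} (h : T < repunit b (k+1)) : G b (k+1) T = G b k T := by
  simp [G, Nat.div_eq_of_lt h, Nat.mod_eq_of_lt h]

lemma G_add_rep (b k T : ℕ) (hk : 1 ≤ k) :
    G b k (T + repunit b k) = G b k T + 1 := by
  obtain ⟨m, rfl⟩ : ∃ m, k = m + 1 := ⟨k - 1, by omega⟩
  have hr : 0 < repunit b (m+1) := one_le_repunit b (by omega)
  simp [G, Nat.add_div_right _ hr, Nat.add_mod_right]
  omega

lemma G_eq_zero_iff {b k T : ℕ} : G b k T = 0 ↔ T = 0 := by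
  constructor
  · intro h
    induction k generalizing T with
    | zero => exact h
    | succ n ih =>
      simp only [G, Nat.add_eq_zero] at h
      have h2 := ih h.2
      have h3 := Nat.div_add_mod T (repunit b (n+1))
      rw [h.1, Nat.mul_zero] at h3
      omega
  · rintro rfl; exact G_zero b k

/-- Computing `G` of `b * r k` at level `k ≥ 1`: it is `b`. -/
lemma G_b_mul_rep {b k : ℕ} (hk : 1 ≤ k) : G b k (b * repunit b k) = b := by
  obtain ⟨m, rfl⟩ : ∃ m, k = m + 1 := ⟨k - 1, by omega⟩
  have hr : 0 < repunit b (m+1) := one_le_repunit b (by omega)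
  simp [G, Nat.mul_div_cancel _ hr, Nat.mul_mod_left, G_zero, mul_comm b,
    Nat.mul_div_cancel_left _ hr]

/-- Evaluate `G` at a decomposed argument. -/
lemma G_succ_eval {b n R s t : ℕ} (hR : R = repunit b (n+1)) (ht : t < R) :
    G b (n+1) (R * s + t) = s + G b n t := by
  subst hR
  simp only [G, Nat.mul_add_div (by omega : 0 < repunit b (n+1)), Nat.mul_add_mod,
    Nat.div_eq_of_lt ht, Nat.mod_eq_of_lt ht, add_zero]

/-- Lemma F: decrementing by one costs at most `b - 1`. -/
lemma G_pred {b : ℕ} (hb : 2 ≤ b) (k : ℕ) : ∀ T, 1 ≤ T → G b k (T - 1) ≤ G b k T + (b - 1) := by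
  induction k with
  | zero => intro T hT; simp [G]; omega
  | succ n ih =>
    intro T hT
    rcases Nat.eq_zero_or_pos n with rfl | hn
    · simp [G_one]; omega
    obtain ⟨R, hR⟩ : ∃ R, R = repunit b (n+1) := ⟨_, rfl⟩
    have hR1 : 1 ≤ R := hR ▸ one_le_repunit b (by omega)
    obtain ⟨s, t, hT1, ht⟩ : ∃ s t, T = R * s + t ∧ t < R :=
      ⟨T / R, T % R, by rw [Nat.div_add_mod], Nat.mod_lt _ (by omega)⟩
    rcases Nat.eq_zero_or_pos t with rfl | hpos
    · -- T = R * s, s ≥ 1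
      have hs : 1 ≤ s := by
        rcases Nat.eq_zero_or_pos s with rfl | h
        · omega
        · exact h
      have key : T - 1 = R * (s - 1) + (R - 1) := by
        obtain ⟨j, rfl⟩ : ∃ j, s = 1 + j := ⟨s - 1, by omega⟩
        simp only [Nat.mul_add, Nat.mul_one] at hT1 ⊢
        simp only [Nat.add_sub_cancel_left]
        omega
      have hRb : R - 1 = b * repunit b n := by
        rw [hR, repunit_succ]; omega
      have e1 : G b (n+1) (T - 1) = (s - 1) + G b n (R - 1) := by
        rw [key]; exact G_succ_eval hR (by omega)
      have e2 : G b (n+1) T = s + G b n 0 := by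
        rw [hT1, add_zero, ← add_zero (R * s)]; exact G_succ_eval hR (by omega)
      rw [e1, e2, hRb, G_b_mul_rep hn, G_zero]
      omega
    · -- t ≥ 1
      have key : T - 1 = R * s + (t - 1) := by omega
      have e1 : G b (n+1) (T - 1) = s + G b n (t - 1) := by
        rw [key]; exact G_succ_eval hR (by omega)
      have e2 : G b (n+1) T = s + G b n t := by rw [hT1]; exact G_succ_eval hR ht
      have := ih t hpos
      omega

lemma G_sub {b : ℕ} (hb : 2 ≤ b) (k : ℕ) : ∀ m T, m ≤ T →
    G b k (T - m) ≤ G b k T + m * (b - 1) := by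
  intro m
  induction m with
  | zero => intro T _; simp
  | succ j ih =>
    intro T hT
    have h1 : T - (j+1) = (T - j) - 1 := by omega
    have h2 := G_pred hb k (T - j) (by omega)
    have h3 := ih T (by omega)
    rw [h1]
    calc G b k (T - j - 1) ≤ G b k (T - j) + (b-1) := h2
    _ ≤ G b k T + j * (b-1) + (b-1) := by omega
    _ = G b k T + (j+1) * (b-1) := by ring

end CNS
namespace CNS

lemma rep_add_pow {b : ℕ} (hb : 2 ≤ b) (k : ℕ) :
    repunit b k + b ^ k = repunit b (k+1) := by
  have h1 := pow_eq_repunit (by omega : 1 ≤ b) k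
  have h2 := repunit_succ b k
  obtain ⟨c, rfl⟩ : ∃ c, b = c + 2 := ⟨b - 2, by omega⟩
  simp only [show c + 2 - 1 = c + 1 by omega] at h1
  rw [h2, ← h1]; ring

/-- Lemma M: adding `b^k` does not decrease `G` at level `k+1`. -/
lemma G_add_pow {b : ℕ} (hb : 2 ≤ b) (k T : ℕ) :
    G b (k+1) T ≤ G b (k+1) (T + b ^ k) := by
  rcases Nat.eq_zero_or_pos k with rfl | hk
  · simp [G_one]
  obtain ⟨m, rfl⟩ : ∃ m, k = m + 1 := ⟨k - 1, by omega⟩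
  obtain ⟨r, hr⟩ : ∃ r, r = repunit b (m+1) := ⟨_, rfl⟩
  obtain ⟨R, hR⟩ : ∃ R, R = repunit b (m+2) := ⟨_, rfl⟩
  have hr1 : 1 ≤ r := hr ▸ one_le_repunit b (by omega)
  have hpow : (b-1) * r + 1 = b ^ (m+1) := hr ▸ pow_eq_repunit (by omega) (m+1)
  have hsum : r + b ^ (m+1) = R := by rw [hr, hR]; exact rep_add_pow hb (m+1)
  have hR1 : 1 ≤ R := by omega
  obtain ⟨s, t, hT1, ht⟩ : ∃ s t, T = R * s + t ∧ t < R :=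
    ⟨T / R, T % R, by rw [Nat.div_add_mod], Nat.mod_lt _ (by omega)⟩
  by_cases htr : t < r
  · -- lower part small
    have htb : t + b ^ (m+1) < R := by omega
    have e1 : G b (m+2) (T + b^(m+1)) = s + G b (m+1) (t + b^(m+1)) := by
      rw [hT1, add_assoc]; exact G_succ_eval hR htb
    have e2 : G b (m+2) T = s + G b (m+1) t := by rw [hT1]; exact G_succ_eval hR ht
    rw [e1, e2]
    by_cases ht1 : t + 1 < r
    · have hpow' : r * (b-1) + 1 = b^(m+1) := by rw [mul_comm]; exact hpow
      have key : t + b^(m+1) = r * (b-1) + (t+1) := by omega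
      have e3 : G b (m+1) (t + b^(m+1)) = (b-1) + G b m (t+1) := by
        rw [key]; exact G_succ_eval hr (by omega)
      have e4 : G b (m+1) t = G b m t := G_of_lt (hr ▸ htr)
      have h5 := G_pred hb m (t+1) (by omega)
      simp only [Nat.add_sub_cancel] at h5
      rw [e3, e4]
      omega
    · -- t + 1 = r
      have ht1' : t + 1 = r := by omega
      have key : t + b^(m+1) = b * r := by
        have : b * r = (b-1) * r + r := by
          obtain ⟨c, rfl⟩ : ∃ c, b = c + 2 := ⟨b - 2, by omega⟩
          simp only [show c + 2 - 1 = c + 1 by omega]; ring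
        omega
      have e3 : G b (m+1) (t + b^(m+1)) = b := by
        rw [key, hr]; exact G_b_mul_rep (by omega)
      have e4 : G b (m+1) t ≤ b := by
        rcases Nat.eq_zero_or_pos m with rfl | hm
        · have : r = 1 := by rw [hr, repunit_one]
          have : t = 0 := by omega
          simp [this, G_zero]
        · have e5 : G b (m+1) t = G b m t := G_of_lt (hr ▸ htr)
          have h6 : t = b * repunit b m := by
            have h7 := repunit_succ b m
            omega
          rw [e5, h6, G_b_mul_rep hm]
      omega
  · -- t ≥ r
    have htb2 : t + b^(m+1) = R + (t - r) := by omega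
    have e1 : G b (m+2) (T + b^(m+1)) = (s+1) + G b (m+1) (t - r) := by
      rw [hT1, add_assoc, htb2, show R * s + (R + (t - r)) = R * (s+1) + (t-r) by ring]
      exact G_succ_eval hR (by omega)
    have e2 : G b (m+2) T = s + G b (m+1) t := by rw [hT1]; exact G_succ_eval hR ht
    have e3 : G b (m+1) t = G b (m+1) (t - r) + 1 := by
      have h8 := G_add_rep b (m+1) (t - r) (by omega)
      rw [hr] at h8 ⊢
      rw [show t - repunit b (m+1) + repunit b (m+1) = t by omega] at h8
      exact h8
    rw [e1, e2, e3]
    omega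

/-- Lemma C: allowing a larger top repunit can only decrease the greedy count. -/
lemma G_succ_le {b : ℕ} (hb : 2 ≤ b) (k : ℕ) (hk : 1 ≤ k) :
    ∀ T, G b (k+1) T ≤ G b k T := by
  intro T
  induction T using Nat.strong_induction_on with
  | _ T IH =>
  by_cases hT : T < repunit b (k+1)
  · rw [G_of_lt hT]
  · push_neg at hT
    have hsum : repunit b k + b ^ k = repunit b (k+1) := rep_add_pow hb k
    have hrk : 1 ≤ repunit b k := one_le_repunit b hk
    have hbk : 1 ≤ b ^ k := Nat.one_le_pow _ _ (by omega)
    have e1 : G b (k+1) T = G b (k+1) (T - repunit b (k+1)) + 1 := by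
      have h := G_add_rep b (k+1) (T - repunit b (k+1)) (by omega)
      rw [show T - repunit b (k+1) + repunit b (k+1) = T by omega] at h
      exact h
    have e2 : G b k T = G b k (T - repunit b k) + 1 := by
      have h := G_add_rep b k (T - repunit b k) hk
      rw [show T - repunit b k + repunit b k = T by omega] at h
      exact h
    have e3 : (T - repunit b (k+1)) + b ^ k = T - repunit b k := by omega
    have c1 : G b (k+1) (T - repunit b (k+1)) ≤ G b (k+1) (T - repunit b k) := by
      rw [← e3]; exact G_add_pow hb k _
    have c2 : G b (k+1) (T - repunit b k) ≤ G b k (T - repunit b k) :=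
      IH _ (by omega)
    omega

end CNS
namespace CNS
open Finset

/-- Greedy minimality: any representation by repunits `r 1, …, r k` uses at least `G b k T`
repunits. -/
lemma G_min {b : ℕ} (hb : 2 ≤ b) :
    ∀ k, 1 ≤ k → ∀ T (y : ℕ → ℕ), ∑ i ∈ Icc 1 k, repunit b i * y i = T →
      G b k T ≤ ∑ i ∈ Icc 1 k, y i := by
  intro k
  induction k with
  | zero => omega
  | succ n ih =>
    intro _ T
    induction T using Nat.strong_induction_on with
    | _ T IH =>
    intro y hy
    rcases Nat.eq_zero_or_pos n with rfl | hn
    · simp only [Icc_self, sum_singleton, repunit_one, one_mul] at hy ⊢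
      rw [G_one]; omega
    have hsplit : ∀ f : ℕ → ℕ, ∑ i ∈ Icc 1 (n+1), f i = (∑ i ∈ Icc 1 n, f i) + f (n+1) :=
      fun f => Finset.sum_Icc_succ_top (by omega : 1 ≤ n + 1) f
    have hR1 : 1 ≤ repunit b (n+1) := one_le_repunit b (by omega)
    rcases Nat.eq_zero_or_pos (y (n+1)) with h0 | hposy
    · have hy' : ∑ i ∈ Icc 1 n, repunit b i * y i = T := by
        rw [hsplit] at hy; rw [h0] at hy; simpa using hy
      calc G b (n+1) T ≤ G b n T := G_succ_le hb n hn T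
      _ ≤ ∑ i ∈ Icc 1 n, y i := ih hn T y hy'
      _ ≤ ∑ i ∈ Icc 1 (n+1), y i := by rw [hsplit]; omega
    · have hTR : repunit b (n+1) ≤ T := by
        rw [hsplit] at hy
        have : repunit b (n+1) * 1 ≤ repunit b (n+1) * y (n+1) := Nat.mul_le_mul_left _ hposy
        omega
      have hyy : ∀ i ∈ Icc 1 n,
          Function.update y (n+1) (y (n+1) - 1) i = y i := by
        intro i hi
        simp only [mem_Icc] at hi
        simp [Function.update_of_ne (by omega : i ≠ n + 1)]
      have hy'sum : ∑ i ∈ Icc 1 (n+1),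
          repunit b i * Function.update y (n+1) (y (n+1) - 1) i = T - repunit b (n+1) := by
        rw [hsplit, Finset.sum_congr rfl (fun i hi => by rw [hyy i hi])]
        rw [hsplit] at hy
        simp only [Function.update_self]
        have h1 : repunit b (n+1) * (y (n+1) - 1) = repunit b (n+1) * y (n+1) - repunit b (n+1) := by
          rw [Nat.mul_sub, Nat.mul_one]
        rw [h1]
        have : repunit b (n+1) * 1 ≤ repunit b (n+1) * y (n+1) := Nat.mul_le_mul_left _ hposy
        omega
      have hGT : G b (n+1) T = G b (n+1) (T - repunit b (n+1)) + 1 := by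
        have h := G_add_rep b (n+1) (T - repunit b (n+1)) (by omega)
        rw [show T - repunit b (n+1) + repunit b (n+1) = T by omega] at h
        exact h
      have hIH := IH (T - repunit b (n+1)) (by omega) _ hy'sum
      have hsum2 : ∑ i ∈ Icc 1 (n+1), Function.update y (n+1) (y (n+1) - 1) i
          = (∑ i ∈ Icc 1 (n+1), y i) - 1 := by
        rw [hsplit, hsplit, Finset.sum_congr rfl (fun i hi => hyy i hi)]
        simp only [Function.update_self]
        have : (Icc 1 n).sum y = ∑ i ∈ Icc 1 n, y i := rfl
        omega
      rw [hsum2] at hIH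
      rw [hsplit] at hIH ⊢
      rw [hsplit] at hsum2
      omega

/-- Greedy existence: some representation attains `G b k T`. -/
lemma G_exists {b : ℕ} : ∀ k, 1 ≤ k → ∀ T, ∃ y : ℕ → ℕ,
    (∑ i ∈ Icc 1 k, repunit b i * y i = T) ∧ (∑ i ∈ Icc 1 k, y i = G b k T) := by
  intro k
  induction k with
  | zero => omega
  | succ n ih =>
    intro _ T
    rcases Nat.eq_zero_or_pos n with rfl | hn
    · exact ⟨fun _ => T, by simp [repunit_one], by simp [G_one]⟩
    obtain ⟨y0, hy0sum, hy0⟩ := ih hn (T % repunit b (n+1))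
    have hR1 : 1 ≤ repunit b (n+1) := one_le_repunit b (by omega)
    refine ⟨Function.update y0 (n+1) (T / repunit b (n+1)), ?_, ?_⟩
    · rw [Finset.sum_Icc_succ_top (by omega : 1 ≤ n + 1)]
      rw [Finset.sum_congr rfl (fun i hi => ?_), hy0sum]
      · simp only [Function.update_self]
        have := Nat.div_add_mod T (repunit b (n+1))
        omega
      · simp only [mem_Icc] at hi
        rw [Function.update_of_ne (by omega : i ≠ n + 1)]
    · rw [Finset.sum_Icc_succ_top (by omega : 1 ≤ n + 1)]
      rw [Finset.sum_congr rfl (fun i hi => ?_), hy0]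
      · simp only [Function.update_self, G]
        omega
      · simp only [mem_Icc] at hi
        rw [Function.update_of_ne (by omega : i ≠ n + 1)]

/-- Digit-sum bound for values below `repunit b (m+1)`. -/
lemma G_lt_bound {b : ℕ} (hb : 2 ≤ b) : ∀ m t, t < repunit b (m+1) →
    G b m t ≤ (b-1) * m + 1 := by
  intro m
  induction m with
  | zero => intro t ht; rw [repunit_one] at ht; interval_cases t; simp [G_zero]
  | succ n ih =>
    intro t ht
    have hr1 : 1 ≤ repunit b (n+1) := one_le_repunit b (by omega)
    have htb : t ≤ b * repunit b (n+1) := by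
      rw [repunit_succ] at ht; omega
    have expand : (b-1) * (n+1+1) = (b-1) * (n+1) + (b-1) := Nat.mul_succ _ _
    have expand2 : (b-1) * (n+1) = (b-1) * n + (b-1) := Nat.mul_succ _ _
    rcases eq_or_lt_of_le htb with heq | hlt
    · rw [heq, G_b_mul_rep (by omega : 1 ≤ n + 1)]
      omega
    · have hdiv : t / repunit b (n+1) ≤ b - 1 := by
        have : t / repunit b (n+1) < b := (Nat.div_lt_iff_lt_mul (by omega)).2 (by omega)
        omega
      have hmod : t % repunit b (n+1) < repunit b (n+1) := Nat.mod_lt _ (by omega)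
      have := ih (t % repunit b (n+1)) hmod
      simp only [G]
      omega

lemma G_le_div_add {b : ℕ} (hb : 2 ≤ b) {k : ℕ} (hk : 1 ≤ k) (T : ℕ) :
    G b k T ≤ T / repunit b k + ((b-1) * (k-1) + 1) := by
  obtain ⟨m, rfl⟩ : ∃ m, k = m + 1 := ⟨k - 1, by omega⟩
  have hr1 : 1 ≤ repunit b (m+1) := one_le_repunit b (by omega)
  have hmod : T % repunit b (m+1) < repunit b (m+1) := Nat.mod_lt _ (by omega)
  have := G_lt_bound hb m (T % repunit b (m+1)) hmod
  simp only [G, Nat.add_sub_cancel]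
  omega

end CNS
namespace CNS
open Finset

/-- Constrained digits stay below the next repunit. -/
lemma digits_lt {b : ℕ} (hb : 2 ≤ b) : ∀ m (x : ℕ → ℕ),
    (∀ i, 1 ≤ i → i ≤ m → x i ≤ b) →
    (∀ i, 2 ≤ i → i ≤ m → x i = b → ∀ j, 1 ≤ j → j < i → x j = 0) →
    ∑ i ∈ Icc 1 m, repunit b i * x i < repunit b (m+1) := by
  intro m
  induction m with
  | zero =>
    intro x _ _
    simp [repunit_one]
  | succ n ih =>
    intro x hle hzero
    rw [Finset.sum_Icc_succ_top (by omega : 1 ≤ n + 1)]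
    have hr1 : 1 ≤ repunit b (n+1) := one_le_repunit b (by omega)
    have hRs : repunit b (n+2) = b * repunit b (n+1) + 1 := repunit_succ b (n+1)
    by_cases htop : x (n+1) = b
    · rcases Nat.eq_zero_or_pos n with rfl | hn
      · simp only [Icc_self, Icc_eq_empty_of_lt (by omega : (1:ℕ) > 0)]
        simp only [show Icc 1 0 = (∅ : Finset ℕ) by rfl, Finset.sum_empty, zero_add]
        rw [repunit_one, htop, one_mul, hRs, repunit_one]
        omega
      · have hz : ∀ i ∈ Icc 1 n, repunit b i * x i = 0 := by
          intro i hi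
          simp only [mem_Icc] at hi
          rw [hzero (n+1) (by omega) (by omega) htop i (by omega) (by omega), mul_zero]
        rw [Finset.sum_eq_zero hz, zero_add, htop, hRs]
        rw [mul_comm]
        omega
    · have hxle : x (n+1) ≤ b - 1 := by
        have := hle (n+1) (by omega) (by omega)
        omega
      have hIH := ih x (fun i h1 h2 => hle i h1 (by omega))
        (fun i h1 h2 => hzero i h1 (by omega))
      have : repunit b (n+1) * x (n+1) ≤ repunit b (n+1) * (b-1) :=
        Nat.mul_le_mul_left _ hxle
      have hbr : repunit b (n+1) * (b-1) + repunit b (n+1) = repunit b (n+1) * b := by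
        obtain ⟨c, rfl⟩ : ∃ c, b = c + 2 := ⟨b - 2, by omega⟩
        simp only [show c + 2 - 1 = c + 1 by omega]
        ring
      rw [hRs]
      have : repunit b (n+1) * b = b * repunit b (n+1) := mul_comm _ _
      omega

/-- The constrained-digit representation has digit sum equal to `G`. -/
lemma sum_digits_eq {b : ℕ} (hb : 2 ≤ b) : ∀ m (x : ℕ → ℕ) (t : ℕ),
    (∀ i, 1 ≤ i → i ≤ m → x i ≤ b) →
    (∀ i, 2 ≤ i → i ≤ m → x i = b → ∀ j, 1 ≤ j → j < i → x j = 0) →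
    ∑ i ∈ Icc 1 m, repunit b i * x i = t →
    ∑ i ∈ Icc 1 m, x i = G b m t := by
  intro m
  induction m with
  | zero =>
    intro x t _ _ hsum
    simp only [show Icc 1 0 = (∅ : Finset ℕ) by rfl, Finset.sum_empty] at hsum ⊢
    rw [← hsum]; rfl
  | succ n ih =>
    intro x t hle hzero hsum
    rw [Finset.sum_Icc_succ_top (by omega : 1 ≤ n + 1)] at hsum
    have hrest : ∑ i ∈ Icc 1 n, repunit b i * x i < repunit b (n+1) :=
      digits_lt hb n x (fun i h1 h2 => hle i h1 (by omega))
        (fun i h1 h2 => hzero i h1 (by omega))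
    have ht : t = repunit b (n+1) * x (n+1) + ∑ i ∈ Icc 1 n, repunit b i * x i := by omega
    have hG : G b (n+1) t = x (n+1) + G b n (∑ i ∈ Icc 1 n, repunit b i * x i) := by
      rw [ht]
      exact G_succ_eval rfl hrest
    rw [Finset.sum_Icc_succ_top (by omega : 1 ≤ n + 1), hG,
      ih x _ (fun i h1 h2 => hle i h1 (by omega)) (fun i h1 h2 => hzero i h1 (by omega)) rfl]
    omega

end CNS
namespace CNS
open Finset

lemma two_mul_le_two_pow {k : ℕ} (hk : 2 ≤ k) : 2 * k ≤ 2 ^ k := by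
  induction k with
  | zero => omega
  | succ n ih =>
    rcases Nat.lt_or_ge n 2 with h | h
    · interval_cases n <;> omega
    · have := ih h
      have : 1 ≤ 2 ^ n := Nat.one_le_pow _ _ (by omega)
      rw [pow_succ]
      omega

lemma rep_transform {b : ℕ} (hb : 1 ≤ b) (a d k : ℕ) (y : ℕ → ℕ) :
    y 0 * a + ∑ i ∈ Finset.Icc 1 k, y i * (b ^ i * a + repunit b i * d)
      = (y 0 + ∑ i ∈ Finset.Icc 1 k, y i) * a
        + (∑ i ∈ Finset.Icc 1 k, repunit b i * y i) * ((b-1)*a + d) := by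
  have hterm : ∀ i ∈ Icc 1 k, y i * (b ^ i * a + repunit b i * d)
      = y i * a + (repunit b i * y i) * ((b-1)*a + d) := by
    intro i _
    rw [← pow_eq_repunit hb i]
    ring
  rw [Finset.sum_congr rfl hterm, Finset.sum_add_distrib, add_mul, Finset.sum_mul,
    Finset.sum_mul]
  ring

end CNS


open CNS Finset

set_option maxHeartbeats 1000000


/-- Frobenius number of the quotient of a CNS numerical semigroup
`⟨a, ba + d, b²a + (b²−1)/(b−1)·d, …, bᵏa + (bᵏ−1)/(b−1)·d⟩` by a positive divisor
`p ≠ a` of `a`. If `a ≥ k − 1 − (d−1)/(b−1)`, then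
`F(⟨A⟩/p) = (Σ x_i)·(a/p) + (a/p − 1)·((b−1)a + d) − a/p`, where `(x_1,…,x_k)` is the
greedy presentation of `a − p` with respect to `B = ((bⁱ−1)/(b−1))_{1≤i≤k}`. -/
theorem stmt_13 (a k b d p : ℕ)
    (ha : 2 ≤ a) (hk : 2 ≤ k) (hb : 2 ≤ b) (hd : 1 ≤ d)
    (hgcd : Nat.gcd a d = 1)
    (hp : 0 < p) (hpa : p ∣ a) (hpne : p ≠ a)
    (hcond : (k : ℚ) - 1 - ((d : ℚ) - 1) / ((b : ℚ) - 1) ≤ (a : ℚ))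
    -- `x` is the greedy presentation of `a - p` with respect to `B`
    (x : ℕ → ℕ)
    (hxsum : ∑ i ∈ Finset.Icc 1 k, repunit b i * x i = a - p)
    (hxk : x k = (a - p) / repunit b k)
    (hxle : ∀ i, 1 ≤ i → i ≤ k - 1 → x i ≤ b)
    (hxzero : ∀ i, 2 ≤ i → i ≤ k - 1 → x i = b → ∀ j, 1 ≤ j → j < i → x j = 0) :
    IsGreatest {z : ℤ | ¬ ∃ n : ℕ, (n : ℤ) = z ∧
        ∃ y : ℕ → ℕ, p * n = y 0 * a +
          ∑ i ∈ Finset.Icc 1 k, y i * (b ^ i * a + repunit b i * d)}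
      (((∑ i ∈ Finset.Icc 1 k, x i : ℕ) : ℤ) * ((a / p : ℕ) : ℤ) +
        (((a / p : ℕ) : ℤ) - 1) * (((b : ℤ) - 1) * a + d) - ((a / p : ℕ) : ℤ)) := by
  -- notation
  set q := a / p with hqdef
  set c := (b - 1) * a + d with hcdef
  have hpq : a = p * q := by rw [hqdef]; exact (Nat.mul_div_cancel' hpa).symm
  have hplt : p < a := lt_of_le_of_ne (Nat.le_of_dvd (by omega) hpa) hpne
  have hq2 : 2 ≤ q := by
    by_contra h
    push_neg at h
    interval_cases q <;> omega
  have hc1 : 1 ≤ c := by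
    have : 1 ≤ (b-1) * a := Nat.one_le_iff_ne_zero.2 (Nat.mul_ne_zero (by omega) (by omega))
    omega
  -- the digit sum of the greedy presentation of a - p
  set gs := ∑ i ∈ Finset.Icc 1 k, x i with hgsdef
  clear_value q c gs
  have hap1 : 1 ≤ a - p := by omega
  -- gs = G b k (a - p)
  have hgstar : gs = G b k (a - p) := by
    obtain ⟨m, rfl⟩ : ∃ m, k = m + 1 := ⟨k - 1, by omega⟩
    have hr1 : 1 ≤ repunit b (m+1) := one_le_repunit b (by omega)
    rw [Finset.sum_Icc_succ_top (by omega : 1 ≤ m + 1)] at hxsum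
    have hdm := Nat.div_add_mod (a - p) (repunit b (m+1))
    have hrest : ∑ i ∈ Icc 1 m, repunit b i * x i = (a - p) % repunit b (m+1) := by
      rw [hxk] at hxsum
      omega
    have hmodlt : (a - p) % repunit b (m+1) < repunit b (m+1) := Nat.mod_lt _ (by omega)
    have hsde := sum_digits_eq hb m x ((a - p) % repunit b (m+1))
      (fun i h1 h2 => hxle i h1 (by omega))
      (fun i h1 h2 => hxzero i h1 (by omega)) hrest
    rw [hgsdef, Finset.sum_Icc_succ_top (by omega : 1 ≤ m + 1), hsde, hxk]
    simp only [G]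
    omega
  have hgpos : 1 ≤ gs := by
    rcases Nat.eq_zero_or_pos gs with h0 | h
    · rw [hgstar] at h0
      rw [G_eq_zero_iff] at h0
      omega
    · exact h
  -- the bound gs ≤ c + 1 coming from hcond
  have hgb : gs ≤ c + 1 := by
    have h0 : (0:ℚ) < (b:ℚ) - 1 := by
      have : (2:ℚ) ≤ (b:ℚ) := by exact_mod_cast hb
      linarith
    have hN : (b-1)*(k-1) + 1 ≤ (b-1)*a + d := by
      have h1 : ((k:ℚ)-1)*((b:ℚ)-1) - ((d:ℚ)-1) ≤ (a:ℚ)*((b:ℚ)-1) := by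
        have h2 := mul_le_mul_of_nonneg_right hcond (le_of_lt h0)
        rw [sub_mul, sub_mul, div_mul_cancel₀ _ (ne_of_gt h0)] at h2
        linarith
      rw [← @Nat.cast_le ℚ]
      push_cast [Nat.cast_sub (show 1 ≤ b by omega), Nat.cast_sub (show 1 ≤ k by omega)]
      nlinarith
    have hmain := G_le_div_add hb (show 1 ≤ k by omega) (a - p)
    rw [← hgstar] at hmain
    rw [hcdef]
    rcases Nat.lt_or_ge (a - p) (repunit b k) with hlt | hge
    · rw [Nat.div_eq_of_lt hlt] at hmain
      omega
    · have hr3 : 3 ≤ repunit b k := three_le_repunit hb hk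
      have ha2k : 2^k ≤ a := by
        have := two_pow_le_repunit hb k
        omega
      have hk2a : 3*k ≤ 2*a := by
        have := two_mul_le_two_pow hk
        omega
      have hka : k ≤ a := by omega
      have hQ3 : 3 * ((a-p)/repunit b k) ≤ a - 1 := by
        have h1 : ((a-p)/repunit b k) * repunit b k ≤ a - p := Nat.div_mul_le_self _ _
        have h2 : ((a-p)/repunit b k) * 3 ≤ ((a-p)/repunit b k) * repunit b k :=
          Nat.mul_le_mul_left _ hr3
        omega
      have hMid : (b-1)*(k-1) + (b-1)*(a-k+1) = (b-1)*a := by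
        rw [← Nat.mul_add]
        congr 1
        omega
      have hone : (a-k+1) ≤ (b-1)*(a-k+1) := Nat.le_mul_of_pos_left _ (by omega)
      omega
  -- coprimality
  have hqa : q ∣ a := ⟨p, by rw [hpq]; ring⟩
  have hqd : Nat.Coprime q d := Nat.Coprime.coprime_dvd_left hqa hgcd
  have hpd : Nat.Coprime p d := Nat.Coprime.coprime_dvd_left hpa hgcd
  have hqc : Nat.Coprime q c := by
    have h2 : d + q * ((b-1) * p) = c := by rw [hcdef, hpq]; ring
    have h1 := (Nat.coprime_add_mul_left_right q d ((b-1) * p)).2 hqd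
    rwa [h2] at h1
  have hpc : Nat.Coprime p c := by
    have h2 : d + p * ((b-1) * q) = c := by rw [hcdef, hpq]; ring
    have h1 := (Nat.coprime_add_mul_left_right p d ((b-1) * q)).2 hpd
    rwa [h2] at h1
  -- the natural-number Frobenius value
  set N := (gs - 1) * q + (q - 1) * c with hNdef
  clear_value N
  have hcast : ((gs : ℕ) : ℤ) * ((q : ℕ) : ℤ) +
        (((q : ℕ) : ℤ) - 1) * (((b : ℤ) - 1) * a + d) - ((q : ℕ) : ℤ) = (N : ℤ) := by
    have e1 : ((c : ℕ) : ℤ) = ((b:ℤ) - 1) * a + d := by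
      rw [hcdef]
      push_cast [Nat.cast_sub (show 1 ≤ b by omega)]
      ring
    rw [hNdef]
    push_cast [Nat.cast_sub (show 1 ≤ gs from hgpos), Nat.cast_sub (show 1 ≤ q by omega),
      Nat.cast_sub (show 1 ≤ b by omega)]
    rw [e1]
    ring
  rw [hcast]
  constructor
  · -- membership : N is not representable
    rintro ⟨n, hn, y, hy⟩
    have hnN : n = N := by exact_mod_cast hn
    rw [hnN, rep_transform (show 1 ≤ b by omega) a d k y] at hy
    rw [← hcdef] at hy
    set M := y 0 + ∑ i ∈ Icc 1 k, y i with hMdef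
    set T := ∑ i ∈ Icc 1 k, repunit b i * y i with hTdef
    clear_value M T
    have hM : G b k T ≤ M := by
      have h1 := G_min hb k (by omega) T y hTdef.symm
      have h2 : (Icc 1 k).sum y = ∑ i ∈ Icc 1 k, y i := rfl
      omega
    have hpT : p ∣ T := by
      have h1 : p ∣ M * a := Dvd.dvd.mul_left hpa M
      have h2 : p ∣ M * a + T * c := by
        rw [← hy]; exact Dvd.intro N rfl
      have h3 : p ∣ T * c := (Nat.dvd_add_right h1).mp h2
      exact hpc.dvd_of_dvd_mul_right h3
    obtain ⟨T', hT'⟩ := hpT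
    have hNe : M * q + T' * c = (gs-1)*q + (q-1)*c := by
      apply Nat.eq_of_mul_eq_mul_left hp
      rw [← hNdef]
      calc p * (M * q + T' * c) = M * (p * q) + (p * T') * c := by ring
      _ = M * a + T * c := by rw [← hpq, ← hT']
      _ = p * N := hy.symm
    have hZ : (M:ℤ)*q + (T':ℤ)*c = ((gs:ℤ)-1)*(q:ℤ) + ((q:ℤ)-1)*(c:ℤ) := by
      have h4 := congrArg (Nat.cast : ℕ → ℤ) hNe
      push_cast [Nat.cast_sub (show 1 ≤ gs from hgpos),
        Nat.cast_sub (show 1 ≤ q by omega)] at h4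
      exact h4
    have hqcZ : IsCoprime (q:ℤ) (c:ℤ) := by
      rw [Nat.isCoprime_iff_coprime]; exact hqc
    obtain ⟨j, hj⟩ : (q:ℤ) ∣ ((T':ℤ) - ((q:ℤ)-1)) := by
      refine hqcZ.dvd_of_dvd_mul_right ⟨(gs:ℤ)-1-(M:ℤ), ?_⟩
      linear_combination hZ
    have hq0 : (0:ℤ) < (q:ℤ) := by exact_mod_cast (show 0 < q by omega)
    have hjc : (j:ℤ) * c = (gs:ℤ) - 1 - M := by
      apply mul_left_cancel₀ (ne_of_gt hq0)
      linear_combination hZ - (c:ℤ) * hj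
    rcases lt_trichotomy j 0 with hjn | hj0 | hjp
    · have hT'0 : (0:ℤ) ≤ (T':ℤ) := Int.natCast_nonneg _
      have hqj : (q:ℤ) * j ≤ -q := by
        calc (q:ℤ) * j ≤ (q:ℤ) * (-1) := by
              exact mul_le_mul_of_nonneg_left (by omega) (le_of_lt hq0)
        _ = -q := by ring
      have hj' : (T':ℤ) - ((q:ℤ)-1) ≤ -q := hj ▸ hqj
      have hq2' : (2:ℤ) ≤ (q:ℤ) := by exact_mod_cast hq2
      linarith only [hj', hT'0, hq2']
    · rw [hj0] at hj hjc
      rw [mul_zero] at hj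
      rw [zero_mul] at hjc
      have hj2 : (T':ℤ) = (q:ℤ) - 1 := by linarith only [hj]
      have hT'q : T' = q - 1 := by omega
      have hMv : M = gs - 1 := by omega
      have hTap : T = a - p := by
        have h5 : p * (q-1) + p = p * q := by
          rw [← Nat.mul_succ]; congr 1; omega
        rw [hT', hT'q]; omega
      rw [hTap, ← hgstar] at hM
      omega
    · have hc0 : (1:ℤ) ≤ (c:ℤ) := by exact_mod_cast hc1
      have hjc1 : (c:ℤ) ≤ j * c := by
        calc (c:ℤ) = 1 * c := (one_mul _).symm
        _ ≤ j * c := by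
              exact mul_le_mul_of_nonneg_right (by omega) (by linarith only [hc0])
      have hM0 : (0:ℤ) ≤ (M:ℤ) := Int.natCast_nonneg _
      have hgbZ : (gs:ℤ) ≤ (c:ℤ) + 1 := by exact_mod_cast hgb
      have hMz : M = 0 := by
        have : (M:ℤ) = 0 := by linarith only [hjc, hjc1, hgbZ, hM0]
        exact_mod_cast this
      rw [hMz] at hM
      have hT0 : T = 0 := G_eq_zero_iff.mp (Nat.le_zero.mp hM)
      have hT'0 : T' = 0 := by
        rcases Nat.mul_eq_zero.mp (hT' ▸ hT0 : p * T' = 0) with h | h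
        · omega
        · exact h
      rw [hT'0] at hj
      have hqj2 : (q:ℤ) ≤ q*j := by
        calc (q:ℤ) = q * 1 := (mul_one _).symm
        _ ≤ q * j := by
              exact mul_le_mul_of_nonneg_left (by omega) (le_of_lt hq0)
      have hq2' : (2:ℤ) ≤ (q:ℤ) := by exact_mod_cast hq2
      push_cast at hj
      linarith only [hj, hqj2, hq2']
  · -- upper bound
    intro z hz
    by_contra hcon
    push_neg at hcon
    have hz0 : (0:ℤ) ≤ z := le_trans (Int.natCast_nonneg N) hcon.le
    obtain ⟨n, hzn⟩ : ∃ n : ℕ, (n:ℤ) = z := ⟨z.toNat, Int.toNat_of_nonneg hz0⟩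
    have hnN : N < n := by
      rw [← hzn] at hcon
      exact_mod_cast hcon
    -- choose the residue t0
    haveI : NeZero q := ⟨by omega⟩
    obtain ⟨t0, ht0q, hmodeq⟩ : ∃ t0, t0 < q ∧ t0 * c ≡ n [MOD q] := by
      have hcu : IsUnit ((c:ℕ) : ZMod q) := by
        rw [ZMod.isUnit_iff_coprime]; exact hqc.symm
      refine ⟨((n : ZMod q) * ((c:ℕ) : ZMod q)⁻¹).val, ZMod.val_lt _, ?_⟩
      rw [← ZMod.natCast_eq_natCast_iff]
      push_cast
      rw [ZMod.natCast_val, ZMod.cast_id]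
      rw [mul_assoc, ZMod.inv_mul_of_unit _ hcu, mul_one]
    have hpt0 : p * t0 + p * (q - 1 - t0) = a - p := by
      have h1 : p * t0 + p * (q-1-t0) = p * (q-1) := by
        rw [← Nat.mul_add]; congr 1; omega
      have h2 : p * (q-1) + p = p * q := by rw [← Nat.mul_succ]; congr 1; omega
      omega
    have hGsub : G b k (p*t0) ≤ gs + (p*(q-1-t0))*(b-1) := by
      have h3 := G_sub hb k (p*(q-1-t0)) (a-p) (by omega)
      rw [show a - p - p*(q-1-t0) = p*t0 by omega, ← hgstar] at h3
      exact h3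
    have hWN : q * G b k (p*t0) + t0*c ≤ gs*q + (q-1)*c := by
      calc q * G b k (p*t0) + t0*c ≤ q * (gs + (p*(q-1-t0))*(b-1)) + t0*c :=
            Nat.add_le_add_right (Nat.mul_le_mul_left _ hGsub) _
      _ = gs*q + (q-1-t0)*((b-1)*(p*q)) + t0*c := by ring
      _ = gs*q + (q-1-t0)*((b-1)*a) + t0*c := by rw [← hpq]
      _ ≤ gs*q + (q-1-t0)*c + t0*c := by
            have h4 : (q-1-t0)*((b-1)*a) ≤ (q-1-t0)*c := Nat.mul_le_mul_left _ (by omega)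
            omega
      _ = gs*q + ((q-1-t0)+t0)*c := by ring
      _ = gs*q + (q-1)*c := by
            congr 2
            omega
    have hNq : N + q = gs*q + (q-1)*c := by
      rw [hNdef]
      have h5 : (gs-1)*q + 1*q = ((gs-1)+1)*q := (Nat.add_mul _ _ _).symm
      have h6 : gs - 1 + 1 = gs := by omega
      rw [h6] at h5
      omega
    have hWn : q * G b k (p*t0) + t0*c ≤ n := by
      by_contra hW
      push_neg at hW
      have hmod2 : (q * G b k (p*t0) + t0*c) ≡ t0*c [MOD q] := by
        simp [Nat.ModEq, Nat.mul_add_mod]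
      have hmm : n ≡ (q * G b k (p*t0) + t0*c) [MOD q] :=
        (hmodeq.symm).trans hmod2.symm
      obtain ⟨mm, hmm2⟩ := (Nat.modEq_iff_dvd' (le_of_lt hW)).mp hmm
      have hmm1 : 1 ≤ mm := by
        rcases Nat.eq_zero_or_pos mm with rfl | h
        · simp at hmm2; omega
        · exact h
      have : q * 1 ≤ q * mm := Nat.mul_le_mul_left _ hmm1
      omega
    have htc : t0 * c ≤ n := le_trans (Nat.le_add_left _ _) hWn
    obtain ⟨M, hMd⟩ := (Nat.modEq_iff_dvd' htc).mp hmodeq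
    have hMG : G b k (p*t0) ≤ M := by
      have h1 : q * G b k (p*t0) ≤ q * M := by omega
      exact Nat.le_of_mul_le_mul_left h1 (by omega)
    obtain ⟨y0, hy0sum, hy0G⟩ := G_exists k (by omega) (p*t0)
    refine hz ⟨n, hzn, Function.update y0 0 (M - G b k (p*t0)), ?_⟩
    have hne0 : ∀ i ∈ Icc 1 k, (i ≠ 0) := by
      intro i hi; simp only [mem_Icc] at hi; omega
    have s1 : ∑ i ∈ Icc 1 k, Function.update y0 0 (M - G b k (p*t0)) i = G b k (p*t0) := by
      rw [Finset.sum_congr rfl (fun i hi => Function.update_of_ne (hne0 i hi) _ _)]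
      exact hy0G
    have s2 : ∑ i ∈ Icc 1 k, repunit b i * Function.update y0 0 (M - G b k (p*t0)) i
        = p * t0 := by
      rw [Finset.sum_congr rfl
        (fun i hi => by rw [Function.update_of_ne (hne0 i hi)])]
      exact hy0sum
    rw [rep_transform (show 1 ≤ b by omega) a d k _, ← hcdef, s1, s2,
      Function.update_self]
    have hn2 : n = q*M + t0*c := by omega
    have hMr : M - G b k (p*t0) + G b k (p*t0) = M := by omega
    calc p * n = p*(q*M + t0*c) := by rw [hn2]
    _ = (M - G b k (p*t0) + G b k (p*t0))*a + (p*t0)*c := by rw [hMr, hpq]; ring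
end
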